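/- arXiv:1611.06630 — 9 statements merged into one kernel-verified Lean document; each statement's English description precedes it below -/
import Mathlib

section
/- For all positive integers q and n, Σ_{d | n} c_q(d)·μ(n/d) equals n·μ(q/n) if n divides q, and 0 otherwise. -/
open Finset

/-- The Ramanujan sum. -/
noncomputable def ramanujanSum (q n : ℕ) : ℤ :=
  ∑ d ∈ (Nat.gcd q n).divisors, ArithmeticFunction.moebius (q / d) * d

theorem ramanujanSum_mul_moebius (q n : ℕ) (hq : 0 < q) (hn : 0 < n) :
    ∑ d ∈ n.divisors, ramanujanSum q d * ArithmeticFunction.moebius (n / d) =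
      if n ∣ q then (n : ℤ) * ArithmeticFunction.moebius (q / n) else 0 := by
  set f : ℕ → ℤ := fun m => if m ∣ q then (m : ℤ) * ArithmeticFunction.moebius (q / m) else 0
    with hf
  have key : ∀ m > 0, ∑ i ∈ m.divisors, f i = ramanujanSum q m := by
    intro m hm
    rw [ramanujanSum, hf]
    rw [← Finset.sum_filter]
    apply Finset.sum_congr
    · ext d
      simp only [Nat.mem_divisors, Finset.mem_filter, Nat.dvd_gcd_iff]
      constructor
      · rintro ⟨⟨hd, _⟩, hdq⟩; exact ⟨⟨hdq, hd⟩, Nat.gcd_ne_zero_left hq.ne'⟩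
      · rintro ⟨⟨hdq, hd⟩, _⟩; exact ⟨⟨hd, hm.ne'⟩, hdq⟩
    · intro d hd
      ring
  have := (ArithmeticFunction.sum_eq_iff_sum_mul_moebius_eq.mp key) n hn
  simp only [hf, Int.cast_id] at this
  rw [← this, Nat.sum_divisorsAntidiagonal' (fun a b => (ArithmeticFunction.moebius a : ℤ) *
    ramanujanSum q b)]
  exact Finset.sum_congr rfl fun d _ => mul_comm _ _
end

section
/- Let a : ℕ → ℂ be an arithmetic function such that for every positive integer q, the series A(q) := q·Σ_{k=1}^∞ a(kq) converges. Then for every positive integer q, the series Σ_{n=1}^∞ a(n)·c_q(n) converges and equals (A*μ)(q) = Σ_{d|q} μ(q/d)·A(d). -/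
open Finset Filter Topology

lemma sum_multiples (a : ℕ → ℂ) (d x : ℕ) (hd : 0 < d) :
    ∑ n ∈ (Finset.Icc 1 x).filter (fun n => d ∣ n), a n
      = ∑ k ∈ Finset.Icc 1 (x / d), a (k * d) := by
  refine Finset.sum_nbij' (fun n => n / d) (fun k => k * d) ?_ ?_ ?_ ?_ ?_
  · intro n hn
    simp only [Finset.mem_filter, Finset.mem_Icc] at hn
    obtain ⟨⟨h1, h2⟩, hdvd⟩ := hn
    simp only [Finset.mem_Icc]
    constructor
    · exact Nat.one_le_div_iff hd |>.mpr (Nat.le_of_dvd (by omega) hdvd)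
    · exact Nat.div_le_div_right h2
  · intro k hk
    simp only [Finset.mem_Icc] at hk
    simp only [Finset.mem_filter, Finset.mem_Icc]
    refine ⟨⟨by nlinarith [hk.1], ?_⟩, dvd_mul_left d k⟩
    exact (Nat.le_div_iff_mul_le hd).mp hk.2
  · intro n hn
    simp only [Finset.mem_filter] at hn
    exact Nat.div_mul_cancel hn.2
  · intro k hk
    exact Nat.mul_div_cancel _ hd
  · intro n hn
    simp only [Finset.mem_filter] at hn
    rw [Nat.div_mul_cancel hn.2]

lemma key_eq (a : ℕ → ℂ) (q : ℕ) (hq : 0 < q) (x : ℕ) :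
    ∑ n ∈ Finset.Icc 1 x, a n * (ramanujanSum q n : ℂ)
      = ∑ d ∈ q.divisors, (ArithmeticFunction.moebius (q / d) : ℂ) *
          ((d : ℂ) * ∑ k ∈ Finset.Icc 1 (x / d), a (k * d)) := by
  have hdiv : ∀ n ∈ Finset.Icc 1 x, (Nat.gcd q n).divisors
      = q.divisors.filter (fun d => d ∣ n) := by
    intro n hn
    simp only [Finset.mem_Icc] at hn
    ext d
    simp [Nat.mem_divisors, Nat.dvd_gcd_iff, Nat.gcd_ne_zero_left hq.ne', hq.ne',
      and_assoc, and_comm]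
  calc ∑ n ∈ Finset.Icc 1 x, a n * (ramanujanSum q n : ℂ)
      = ∑ n ∈ Finset.Icc 1 x, ∑ d ∈ q.divisors.filter (fun d => d ∣ n),
          a n * ((ArithmeticFunction.moebius (q / d) : ℂ) * d) := by
        refine Finset.sum_congr rfl fun n hn => ?_
        rw [ramanujanSum, hdiv n hn]
        push_cast
        rw [Finset.mul_sum]
    _ = ∑ n ∈ Finset.Icc 1 x, ∑ d ∈ q.divisors,
          if d ∣ n then a n * ((ArithmeticFunction.moebius (q / d) : ℂ) * d) else 0 := by
        simp [Finset.sum_filter]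
    _ = ∑ d ∈ q.divisors, ∑ n ∈ Finset.Icc 1 x,
          if d ∣ n then a n * ((ArithmeticFunction.moebius (q / d) : ℂ) * d) else 0 := by
        rw [Finset.sum_comm]
    _ = ∑ d ∈ q.divisors, (ArithmeticFunction.moebius (q / d) : ℂ) *
          ((d : ℂ) * ∑ k ∈ Finset.Icc 1 (x / d), a (k * d)) := by
        refine Finset.sum_congr rfl fun d hd => ?_
        have hd0 : 0 < d := Nat.pos_of_mem_divisors hd
        rw [← Finset.sum_filter, ← sum_multiples a d x hd0, Finset.mul_sum, Finset.mul_sum]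
        refine Finset.sum_congr rfl fun n _ => ?_
        ring

theorem dual_lucht (a A : ℕ → ℂ)
    (hA : ∀ q : ℕ, 0 < q →
      Tendsto (fun x : ℕ => (q : ℂ) * ∑ k ∈ Finset.Icc 1 x, a (k * q)) atTop (𝓝 (A q)))
    (q : ℕ) (hq : 0 < q) :
    Tendsto (fun x : ℕ => ∑ n ∈ Finset.Icc 1 x, a n * (ramanujanSum q n : ℂ)) atTop
      (𝓝 (∑ d ∈ q.divisors, (ArithmeticFunction.moebius (q / d) : ℂ) * A d)) := by
  have h : (fun x : ℕ => ∑ n ∈ Finset.Icc 1 x, a n * (ramanujanSum q n : ℂ))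
      = fun x : ℕ => ∑ d ∈ q.divisors, (ArithmeticFunction.moebius (q / d) : ℂ) *
          ((d : ℂ) * ∑ k ∈ Finset.Icc 1 (x / d), a (k * d)) :=
    funext (key_eq a q hq)
  rw [h]
  refine tendsto_finset_sum _ fun d hd => ?_
  have hd0 : 0 < d := Nat.pos_of_mem_divisors hd
  have hdivTop : Tendsto (fun x : ℕ => x / d) atTop atTop := by
    refine tendsto_atTop_atTop.mpr fun b => ⟨b * d, fun x hx => ?_⟩
    exact (Nat.le_div_iff_mul_le hd0).mpr hx
  exact ((hA d hd0).comp hdivTop).const_mul _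
end

section
/- For real s > 1 and every positive integer q, Σ_{n=1}^∞ c_q(n)/n^s = ζ(s)·q^{1-s}·Π_{p | q}(1 − p^{s-1}), i.e., (1/ζ(s))·Σ_{n=1}^∞ c_q(n)/n^s = Σ_{d|q} d^{1-s} μ(q/d). -/
open Finset Filter Topology

theorem dual_rf_series_sigma (s : ℝ) (hs : 1 < s) (q : ℕ) (hq : 0 < q) :
    Tendsto (fun x : ℕ => ∑ n ∈ Finset.Icc 1 x, (ramanujanSum q n : ℝ) / (n : ℝ) ^ s) atTop
      (𝓝 ((∑' m : ℕ+, 1 / (m : ℝ) ^ s) *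
        ∑ d ∈ q.divisors, (d : ℝ) ^ (1 - s) * ArithmeticFunction.moebius (q / d))) := by
  have hs0 : s ≠ 0 := by linarith
  set f : ℕ → ℝ := fun n => 1 / (n : ℝ) ^ s with hfdef
  have hf0 : f 0 = 0 := by simp [f, Real.zero_rpow hs0]
  have hsum : Summable f := Real.summable_one_div_nat_rpow.mpr hs
  have hteq : (∑' m : ℕ+, 1 / (m : ℝ) ^ s) = ∑' n : ℕ, f n := by
    have : (∑' m : ℕ+, f (m : ℕ)) = ∑' n : ℕ, f n := by
      refine Function.Injective.tsum_eq (f := f) (g := ((↑) : ℕ+ → ℕ)) ?_ ?_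
      · exact fun a b h => PNat.coe_injective h
      · intro n hn
        rcases Nat.eq_zero_or_pos n with rfl | hn'
        · simp [hf0] at hn
        · exact ⟨⟨n, hn'⟩, rfl⟩
    rw [← this]
  have hL : Tendsto (fun x : ℕ => ∑ m ∈ Icc 1 x, f m) atTop
      (𝓝 (∑' m : ℕ+, 1 / (m : ℝ) ^ s)) := by
    rw [hteq]
    have h1 := hsum.hasSum.tendsto_sum_nat.comp (tendsto_add_atTop_nat 1)
    refine h1.congr fun x => ?_
    refine (Finset.sum_subset ?_ ?_).symm
    · intro m hm
      simp only [mem_Icc] at hm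
      simp only [Finset.mem_range]; omega
    · intro m hm hm'
      simp only [mem_Icc, Finset.mem_range, not_and, not_le] at hm hm'
      have : m = 0 := by omega
      simp [this, hf0]
  have key : ∀ x : ℕ, ∑ n ∈ Icc 1 x, (ramanujanSum q n : ℝ) / (n : ℝ) ^ s
      = ∑ d ∈ q.divisors,
          ((d : ℝ) ^ (1 - s) * (ArithmeticFunction.moebius (q / d) : ℝ)) *
            ∑ m ∈ Icc 1 (x / d), f m := by
    intro x
    have step1 : ∀ n ∈ Icc 1 x, (ramanujanSum q n : ℝ) / (n : ℝ) ^ s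
        = ∑ d ∈ q.divisors, if d ∣ n then
            ((ArithmeticFunction.moebius (q / d) : ℝ) * d) / (n : ℝ) ^ s else 0 := by
      intro n hn
      simp only [mem_Icc] at hn
      have hgcd : (Nat.gcd q n).divisors = q.divisors.filter (· ∣ n) := by
        ext d
        simp only [Nat.mem_divisors, Finset.mem_filter, Nat.dvd_gcd_iff]
        constructor
        · rintro ⟨⟨h1, h2⟩, -⟩
          exact ⟨⟨h1, hq.ne'⟩, h2⟩
        · rintro ⟨⟨h1, -⟩, h2⟩
          exact ⟨⟨h1, h2⟩, Nat.gcd_ne_zero_left hq.ne'⟩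
      rw [ramanujanSum, hgcd]
      push_cast
      rw [Finset.sum_div, Finset.sum_filter]
    rw [Finset.sum_congr rfl step1, Finset.sum_comm]
    refine Finset.sum_congr rfl fun d hd => ?_
    have hd0 : 0 < d := Nat.pos_of_mem_divisors hd
    rw [← Finset.sum_filter]
    have reindex : ∑ n ∈ (Icc 1 x).filter (d ∣ ·),
          ((ArithmeticFunction.moebius (q / d) : ℝ) * d) / (n : ℝ) ^ s
        = ∑ m ∈ Icc 1 (x / d),
          ((ArithmeticFunction.moebius (q / d) : ℝ) * d) / ((d * m : ℕ) : ℝ) ^ s := by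
      refine Finset.sum_nbij' (fun n => n / d) (fun m => d * m) ?_ ?_ ?_ ?_ ?_
      · intro n hn
        simp only [Finset.mem_filter, mem_Icc] at hn
        obtain ⟨⟨h1, h2⟩, h3⟩ := hn
        simp only [mem_Icc]
        exact ⟨(Nat.one_le_div_iff hd0).mpr (Nat.le_of_dvd (by omega) h3),
          Nat.div_le_div_right h2⟩
      · intro m hm
        simp only [mem_Icc] at hm
        simp only [Finset.mem_filter, mem_Icc]
        refine ⟨⟨Nat.one_le_iff_ne_zero.mpr (Nat.mul_ne_zero hd0.ne' (by omega)), ?_⟩, Dvd.intro m rfl⟩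
        have := (Nat.le_div_iff_mul_le hd0).mp hm.2
        calc d * m = m * d := Nat.mul_comm d m
          _ ≤ x := this
      · intro n hn
        simp only [Finset.mem_filter] at hn
        exact Nat.mul_div_cancel' hn.2
      · intro m _
        exact Nat.mul_div_cancel_left m hd0
      · intro n hn
        simp only [Finset.mem_filter] at hn
        rw [Nat.mul_div_cancel' hn.2]
    rw [reindex, Finset.mul_sum]
    refine Finset.sum_congr rfl fun m hm => ?_
    simp only [mem_Icc] at hm
    have hm0 : (0:ℝ) < m := by exact_mod_cast hm.1
    have hd0' : (0:ℝ) < d := by exact_mod_cast hd0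
    have hmul : ((d * m : ℕ) : ℝ) ^ s = (d : ℝ) ^ s * (m : ℝ) ^ s := by
      push_cast
      exact Real.mul_rpow hd0'.le hm0.le
    have hds : (d : ℝ) ^ (1 - s) = (d : ℝ) / (d : ℝ) ^ s := by
      rw [Real.rpow_sub hd0', Real.rpow_one]
    rw [hmul, hds]
    have h1 : (d : ℝ) ^ s ≠ 0 := by positivity
    have h2 : (m : ℝ) ^ s ≠ 0 := by positivity
    simp only [hfdef]
    field_simp
  refine Tendsto.congr (fun x => (key x).symm) ?_
  have hrw : (∑' m : ℕ+, 1 / (m : ℝ) ^ s) *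
        ∑ d ∈ q.divisors, (d : ℝ) ^ (1 - s) * (ArithmeticFunction.moebius (q / d) : ℝ)
      = ∑ d ∈ q.divisors,
          ((d : ℝ) ^ (1 - s) * (ArithmeticFunction.moebius (q / d) : ℝ)) *
            (∑' m : ℕ+, 1 / (m : ℝ) ^ s) := by
    rw [Finset.mul_sum]
    exact Finset.sum_congr rfl fun d _ => mul_comm _ _
  rw [hrw]
  refine tendsto_finset_sum _ fun d hd => ?_
  have hd0 : 0 < d := Nat.pos_of_mem_divisors hd
  have hdiv : Tendsto (fun x : ℕ => x / d) atTop atTop := by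
    refine tendsto_atTop_atTop.mpr fun b => ⟨d * b, fun x hx => ?_⟩
    exact (Nat.le_div_iff_mul_le hd0).mpr (by rw [Nat.mul_comm]; exact hx)
  exact (hL.comp hdiv).const_mul _
end

section
/- For real s > 1 and every positive integer q, Σ_{n=1}^∞ μ(n)·c_q(n)/n^s = (1/ζ(s))·((id·μ/φ_s) * μ)(q), where φ_s(q) = q^s·Π_{p|q}(1 − 1/p^s). -/
open Finset Filter Topology

/-- `φ_s(q) = q^s ∏_{p ∣ q} (1 - p^{-s})`. -/
noncomputable def phiS (s : ℝ) (q : ℕ) : ℝ :=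
  (q : ℝ) ^ s * ∏ p ∈ q.primeFactors, (1 - 1 / (p : ℝ) ^ s)

open ArithmeticFunction

noncomputable def Fa (s : ℝ) (d : ℕ) : ℕ → ℝ :=
  fun m => if Nat.Coprime m d then (moebius m : ℝ) / (m : ℝ) ^ s else 0

lemma summable_base {s : ℝ} (hs : 1 < s) : Summable (fun n : ℕ => 1 / (n : ℝ) ^ s) :=
  Real.summable_one_div_nat_rpow.mpr hs

lemma moebius_div_bound (s : ℝ) (n : ℕ) :
    ‖(moebius n : ℝ) / (n : ℝ) ^ s‖ ≤ 1 / (n : ℝ) ^ s := by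
  rcases Nat.eq_zero_or_pos n with h0 | hn
  · simp [h0]
    positivity
  have hμ : |(moebius n : ℝ)| ≤ 1 := by exact_mod_cast (abs_moebius_le_one (n := n))
  have hp : (0:ℝ) < (n : ℝ) ^ s := Real.rpow_pos_of_pos (by exact_mod_cast hn) s
  rw [norm_div, Real.norm_eq_abs, Real.norm_eq_abs, abs_of_pos hp]
  gcongr

lemma summable_Fa {s : ℝ} (hs : 1 < s) (d : ℕ) : Summable (Fa s d) := by
  apply Summable.of_norm_bounded (summable_base hs)
  intro n
  unfold Fa
  split
  · exact moebius_div_bound s n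
  · simpa using div_nonneg zero_le_one (Real.rpow_nonneg (Nat.cast_nonneg n) s)

lemma Fa_mul_prime {s : ℝ} (d p : ℕ) (hp : p.Prime) (hpd : ¬ p ∣ d) (k : ℕ) :
    Fa s d (p * k) = -(1 / (p:ℝ) ^ s) * Fa s (d * p) k := by
  unfold Fa
  by_cases h1 : Nat.Coprime k d
  · by_cases h2 : p ∣ k
    · have hnsq : ¬ Squarefree (p * k) := by
        intro hsq
        exact hp.prime.not_unit (hsq p (mul_dvd_mul_left p h2))
      have hm : moebius (p * k) = 0 := moebius_eq_zero_of_not_squarefree hnsq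
      have hr : ¬ Nat.Coprime k (d * p) := by
        intro h
        exact (Nat.Prime.coprime_iff_not_dvd hp).mp
          ((Nat.Coprime.coprime_dvd_right (dvd_mul_left p d) h).symm) h2
      rw [if_neg hr, mul_zero, hm]
      split <;> simp
    · have hcpk : Nat.Coprime p k := (Nat.Prime.coprime_iff_not_dvd hp).mpr h2
      have hcpd : Nat.Coprime p d := (Nat.Prime.coprime_iff_not_dvd hp).mpr hpd
      have hl : Nat.Coprime (p * k) d := Nat.Coprime.mul hcpd h1
      have hr : Nat.Coprime k (d * p) := Nat.Coprime.mul_right h1 hcpk.symm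
      rw [if_pos hl, if_pos hr]
      have hμ : moebius (p * k) = moebius p * moebius k :=
        isMultiplicative_moebius.map_mul_of_coprime hcpk
      have hpow : ((p * k : ℕ) : ℝ) ^ s = (p:ℝ) ^ s * (k:ℝ) ^ s := by
        push_cast
        exact Real.mul_rpow (Nat.cast_nonneg p) (Nat.cast_nonneg k)
      rw [hpow, hμ, moebius_apply_prime hp]
      push_cast
      ring
  · have hl : ¬ Nat.Coprime (p * k) d := fun h => h1 (Nat.Coprime.coprime_dvd_left (dvd_mul_left k p) h)
    have hr : ¬ Nat.Coprime k (d * p) := fun h => h1 (Nat.Coprime.coprime_dvd_right (dvd_mul_right d p) h)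
    rw [if_neg hl, if_neg hr, mul_zero]

lemma tsum_Fa_step {s : ℝ} (hs : 1 < s) (d p : ℕ) (hp : p.Prime) (hpd : ¬ p ∣ d) :
    ∑' m, Fa s d m = (1 - 1 / (p:ℝ) ^ s) * ∑' m, Fa s (d * p) m := by
  have hinj : Function.Injective (fun k : ℕ => p * k) :=
    fun a b h => Nat.eq_of_mul_eq_mul_left hp.pos h
  have hsupp : Function.support (fun m => if p ∣ m then Fa s d m else 0) ⊆
      Set.range (fun k : ℕ => p * k) := by
    intro m hm
    have hdvd : p ∣ m := by
      by_contra h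
      simp [h] at hm
    obtain ⟨k, rfl⟩ := hdvd
    exact ⟨k, rfl⟩
  have h2 : ∑' m, (if p ∣ m then Fa s d m else 0)
      = -(1 / (p:ℝ) ^ s) * ∑' m, Fa s (d * p) m := by
    rw [← hinj.tsum_eq hsupp]
    simp only [dvd_mul_right, if_pos]
    rw [← tsum_mul_left]
    exact tsum_congr fun k => Fa_mul_prime d p hp hpd k
  have hpt : ∀ m, Fa s d m = Fa s (d * p) m + (if p ∣ m then Fa s d m else 0) := by
    intro m
    by_cases h1 : Nat.Coprime m d
    · by_cases h2 : p ∣ m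
      · have : ¬ Nat.Coprime m (d * p) := by
          intro h
          exact (Nat.Prime.coprime_iff_not_dvd hp).mp
            ((Nat.Coprime.coprime_dvd_right (dvd_mul_left p d) h).symm) h2
        simp [Fa, if_pos h1, if_neg this, if_pos h2]
      · have : Nat.Coprime m (d * p) :=
          Nat.Coprime.mul_right h1 (((Nat.Prime.coprime_iff_not_dvd hp).mpr h2).symm)
        simp [Fa, if_pos h1, if_pos this, if_neg h2]
    · have : ¬ Nat.Coprime m (d * p) :=
        fun h => h1 (Nat.Coprime.coprime_dvd_right (dvd_mul_right d p) h)
      simp [Fa, if_neg h1, if_neg this]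
  have hsum1 : Summable (Fa s (d * p)) := summable_Fa hs _
  have hsum2 : Summable (fun m => if p ∣ m then Fa s d m else 0) := by
    apply Summable.of_norm_bounded (summable_base hs)
    intro n
    split
    · have := summable_Fa hs d  -- dummy
      unfold Fa
      split
      · exact moebius_div_bound s n
      · simpa using div_nonneg zero_le_one (Real.rpow_nonneg (Nat.cast_nonneg n) s)
    · simpa using div_nonneg zero_le_one (Real.rpow_nonneg (Nat.cast_nonneg n) s)
  calc ∑' m, Fa s d m
      = ∑' m, (Fa s (d * p) m + (if p ∣ m then Fa s d m else 0)) := tsum_congr hpt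
    _ = (∑' m, Fa s (d * p) m) + ∑' m, (if p ∣ m then Fa s d m else 0) :=
        Summable.tsum_add hsum1 hsum2
    _ = (1 - 1 / (p:ℝ) ^ s) * ∑' m, Fa s (d * p) m := by rw [h2]; ring

lemma tsum_Fa_prod {s : ℝ} (hs : 1 < s) (t : Finset ℕ) (ht : ∀ p ∈ t, p.Prime) :
    ∑' m, Fa s 1 m =
      (∏ p ∈ t, (1 - 1 / (p:ℝ) ^ s)) * ∑' m, Fa s (∏ p ∈ t, p) m := by
  induction t using Finset.induction_on with
  | empty => simp
  | @insert a t' ha ih =>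
      have hprime : a.Prime := ht a (Finset.mem_insert_self a t')
      have ht' : ∀ p ∈ t', p.Prime := fun p hp => ht p (Finset.mem_insert_of_mem hp)
      have hnd : ¬ a ∣ ∏ p ∈ t', p := by
        intro hdvd
        obtain ⟨p, hp, hap⟩ := hprime.prime.exists_mem_finset_dvd hdvd
        exact ha ((Nat.prime_dvd_prime_iff_eq hprime (ht' p hp)).mp hap ▸ hp)
      rw [ih ht', tsum_Fa_step hs _ a hprime hnd, Finset.prod_insert ha,
        Finset.prod_insert ha, mul_comm (∏ p ∈ t', p) a]
      ring_nf

open scoped LSeries.notation in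
lemma tsum_Fa_one_mul_zeta {s : ℝ} (hs : 1 < s) :
    (∑' m, Fa s 1 m) * (∑' m : ℕ+, 1 / (m : ℝ) ^ s) = 1 := by
  have hre : 1 < (s : ℂ).re := by simpa using hs
  have hZ : ((∑' m : ℕ+, 1 / (m : ℝ) ^ s : ℝ) : ℂ) = LSeries ↗(ArithmeticFunction.zeta) (s : ℂ) := by
    have h1 : ∑' m : ℕ+, 1 / ((m:ℕ) : ℝ) ^ s = ∑' n : ℕ, 1 / (n : ℝ) ^ s := by
      apply Function.Injective.tsum_eq (g := ((↑) : ℕ+ → ℕ))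
        (f := fun n : ℕ => 1 / (n : ℝ) ^ s) PNat.coe_injective
      intro n hn
      rcases Nat.eq_zero_or_pos n with rfl | hnpos
      · exfalso
        apply hn
        simp [Real.zero_rpow (by linarith : s ≠ 0)]
      · exact ⟨⟨n, hnpos⟩, rfl⟩
    rw [h1, Complex.ofReal_tsum]
    unfold LSeries
    apply tsum_congr
    intro n
    rcases Nat.eq_zero_or_pos n with rfl | hnpos
    · simp [LSeries.term, Real.zero_rpow (by linarith : s ≠ 0)]
    · rw [LSeries.term_of_ne_zero hnpos.ne']
      rw [ArithmeticFunction.zeta_apply_ne hnpos.ne']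
      rw [Complex.ofReal_div, Complex.ofReal_one, Complex.ofReal_cpow (Nat.cast_nonneg n)]
      norm_num
  have hS : ((∑' m, Fa s 1 m : ℝ) : ℂ) = LSeries ↗(ArithmeticFunction.moebius) (s : ℂ) := by
    rw [Complex.ofReal_tsum]
    apply tsum_congr
    intro n
    rcases Nat.eq_zero_or_pos n with rfl | hnpos
    · simp [LSeries.term, Fa]
    · rw [LSeries.term_of_ne_zero hnpos.ne']
      unfold Fa
      rw [if_pos (Nat.coprime_one_right n)]
      rw [Complex.ofReal_div, Complex.ofReal_cpow (Nat.cast_nonneg n)]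
      push_cast
      ring
  have := ArithmeticFunction.LSeries_zeta_mul_Lseries_moebius hre
  have hmain : ((∑' m, Fa s 1 m) * (∑' m : ℕ+, 1 / (m : ℝ) ^ s) : ℝ) = (1 : ℝ) := by
    have : (((∑' m, Fa s 1 m) * (∑' m : ℕ+, 1 / (m : ℝ) ^ s) : ℝ) : ℂ) = 1 := by
      rw [Complex.ofReal_mul, hZ, hS, mul_comm]
      exact this
    exact_mod_cast this
  exact hmain

lemma moebius_mul_pt {s : ℝ} (d : ℕ) (hd : Squarefree d) (k : ℕ) :
    (moebius (d * k) : ℝ) / ((d * k : ℕ) : ℝ) ^ s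
      = (moebius d : ℝ) / (d : ℝ) ^ s * Fa s d k := by
  have hpow : ((d * k : ℕ) : ℝ) ^ s = (d:ℝ) ^ s * (k:ℝ) ^ s := by
    push_cast
    exact Real.mul_rpow (Nat.cast_nonneg d) (Nat.cast_nonneg k)
  by_cases h1 : Nat.Coprime d k
  · have hμ : moebius (d * k) = moebius d * moebius k :=
      isMultiplicative_moebius.map_mul_of_coprime h1
    unfold Fa
    rw [if_pos h1.symm, hμ, hpow]
    push_cast
    ring
  · have hg1 : Nat.gcd d k ≠ 1 := h1
    obtain ⟨p, hp, hpg⟩ := Nat.exists_prime_and_dvd hg1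
    have hpd : p ∣ d := hpg.trans (Nat.gcd_dvd_left d k)
    have hpk : p ∣ k := hpg.trans (Nat.gcd_dvd_right d k)
    have hnsq : ¬ Squarefree (d * k) := by
      intro hsq
      exact hp.prime.not_unit (hsq p (mul_dvd_mul hpd hpk))
    have hμ : moebius (d * k) = 0 := moebius_eq_zero_of_not_squarefree hnsq
    unfold Fa
    rw [if_neg (fun h => h1 h.symm), hμ]
    simp

lemma tsum_multiples {s : ℝ} (d : ℕ) (hd : Squarefree d) :
    ∑' n, (if d ∣ n then (moebius n : ℝ) / (n : ℝ) ^ s else 0)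
      = (moebius d : ℝ) / (d : ℝ) ^ s * ∑' m, Fa s d m := by
  have hdpos : 0 < d := Nat.pos_of_ne_zero hd.ne_zero
  have hinj : Function.Injective (fun k : ℕ => d * k) :=
    fun a b h => Nat.eq_of_mul_eq_mul_left hdpos h
  have hsupp : Function.support
      (fun n => if d ∣ n then (moebius n : ℝ) / (n : ℝ) ^ s else 0)
      ⊆ Set.range (fun k : ℕ => d * k) := by
    intro n hn
    have hdvd : d ∣ n := by
      by_contra h
      simp [h] at hn
    obtain ⟨k, rfl⟩ := hdvd
    exact ⟨k, rfl⟩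
  rw [← hinj.tsum_eq hsupp]
  simp only [dvd_mul_right, if_pos]
  rw [← tsum_mul_left]
  exact tsum_congr fun k => moebius_mul_pt d hd k

lemma hasSum_divisor_term {s : ℝ} (hs : 1 < s) (q d : ℕ) (hq : 0 < q)
    (hd : d ∈ q.divisors) :
    HasSum (fun n => ((d:ℝ) * (moebius (q / d) : ℝ)) *
        (if d ∣ n then (moebius n : ℝ) / (n : ℝ) ^ s else 0))
      ((1 / ∑' m : ℕ+, 1 / (m : ℝ) ^ s) *
        ((d : ℝ) * (moebius d : ℝ) / phiS s d * (moebius (q / d) : ℝ))) := by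
  set Z := ∑' m : ℕ+, 1 / (m : ℝ) ^ s with hZdef
  have hZ1 : (∑' m, Fa s 1 m) * Z = 1 := tsum_Fa_one_mul_zeta hs
  have hZne : Z ≠ 0 := fun h => by simp [h] at hZ1
  have hdpos : 0 < d := Nat.pos_of_mem_divisors hd
  by_cases hsq : Squarefree d
  · have hfs : Summable (fun n => if d ∣ n then (moebius n : ℝ) / (n : ℝ) ^ s else 0) := by
      apply Summable.of_norm_bounded (summable_base hs)
      intro n
      split
      · exact moebius_div_bound s n
      · simpa using div_nonneg zero_le_one (Real.rpow_nonneg (Nat.cast_nonneg n) s)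
    have H := (hfs.hasSum).mul_left ((d:ℝ) * (moebius (q / d) : ℝ))
    convert H using 1
    · rfl
    rw [tsum_multiples d hsq]
    have hprod := tsum_Fa_prod hs d.primeFactors (fun p hp => Nat.prime_of_mem_primeFactors hp)
    rw [Nat.prod_primeFactors_of_squarefree hsq] at hprod
    have hPpos : 0 < ∏ p ∈ d.primeFactors, (1 - 1 / (p:ℝ) ^ s) := by
      apply Finset.prod_pos
      intro p hp
      have hp2 : 1 < (p : ℝ) := by exact_mod_cast (Nat.prime_of_mem_primeFactors hp).one_lt
      have : 1 < (p : ℝ) ^ s := Real.one_lt_rpow_iff_of_pos (by linarith) |>.mpr (Or.inl ⟨hp2, by linarith⟩)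
      have : 1 / (p:ℝ) ^ s < 1 := by
        rw [div_lt_one (by linarith)]
        linarith
      linarith
    have hdspos : (0:ℝ) < (d : ℝ) ^ s := Real.rpow_pos_of_pos (by exact_mod_cast hdpos) s
    have hSd : ∑' m, Fa s d m
        = (∑' m, Fa s 1 m) / ∏ p ∈ d.primeFactors, (1 - 1 / (p:ℝ) ^ s) := by
      field_simp [hprod]
      rw [hprod]; ring
    have hS1 : (∑' m, Fa s 1 m) = 1 / Z := by
      field_simp
      linarith [hZ1]
    rw [hSd, hS1]
    unfold phiS
    field_simp
  · have hzero : (fun n => ((d:ℝ) * (moebius (q / d) : ℝ)) *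
        (if d ∣ n then (moebius n : ℝ) / (n : ℝ) ^ s else 0)) = fun _ => (0:ℝ) := by
      funext n
      rcases em (d ∣ n) with hdn | hdn
      · have : ¬ Squarefree n := fun h => hsq (h.squarefree_of_dvd hdn)
        simp [hdn, moebius_eq_zero_of_not_squarefree this]
      · simp [hdn]
    rw [hzero]
    have : (moebius d : ℝ) = 0 := by
      exact_mod_cast moebius_eq_zero_of_not_squarefree hsq
    rw [this]
    simpa using hasSum_zero

theorem dual_rf_moebius (s : ℝ) (hs : 1 < s) (q : ℕ) (hq : 0 < q) :
    Tendsto (fun x : ℕ => ∑ n ∈ Finset.Icc 1 x,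
        (ArithmeticFunction.moebius n : ℝ) * (ramanujanSum q n : ℝ) / (n : ℝ) ^ s) atTop
      (𝓝 ((1 / ∑' m : ℕ+, 1 / (m : ℝ) ^ s) *
        ∑ d ∈ q.divisors, (d : ℝ) * (ArithmeticFunction.moebius d : ℝ) / phiS s d *
          (ArithmeticFunction.moebius (q / d) : ℝ))) := by
  set f : ℕ → ℝ := fun n => (moebius n : ℝ) * (ramanujanSum q n : ℝ) / (n : ℝ) ^ s with hf
  have key : ∀ n, f n = ∑ d ∈ q.divisors, ((d:ℝ) * (moebius (q / d) : ℝ)) *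
      (if d ∣ n then (moebius n : ℝ) / (n : ℝ) ^ s else 0) := by
    intro n
    have hdiveq : (Nat.gcd q n).divisors = q.divisors.filter (· ∣ n) := by
      ext e
      simp only [Nat.mem_divisors, Finset.mem_filter, Nat.dvd_gcd_iff]
      constructor
      · rintro ⟨⟨h1, h2⟩, -⟩
        exact ⟨⟨h1, hq.ne'⟩, h2⟩
      · rintro ⟨⟨h1, -⟩, h2⟩
        exact ⟨⟨h1, h2⟩, Nat.gcd_ne_zero_left hq.ne'⟩
    have hc : (ramanujanSum q n : ℝ)
        = ∑ d ∈ q.divisors, (if d ∣ n then (moebius (q / d) : ℝ) * d else 0) := by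
      unfold ramanujanSum
      push_cast
      rw [hdiveq, Finset.sum_filter]
    rw [hf]
    simp only
    rw [hc, Finset.mul_sum, Finset.sum_div]
    apply Finset.sum_congr rfl
    intro d hd
    split
    · ring
    · simp
  have hsum : HasSum f ((1 / ∑' m : ℕ+, 1 / (m : ℝ) ^ s) *
      ∑ d ∈ q.divisors, (d : ℝ) * (moebius d : ℝ) / phiS s d * (moebius (q / d) : ℝ)) := by
    rw [Finset.mul_sum]
    have := hasSum_sum (f := fun (d : ℕ) (n : ℕ) => ((d:ℝ) * (moebius (q / d) : ℝ)) *
        (if d ∣ n then (moebius n : ℝ) / (n : ℝ) ^ s else 0))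
      (s := q.divisors)
      (a := fun d => (1 / ∑' m : ℕ+, 1 / (m : ℝ) ^ s) *
        ((d : ℝ) * (moebius d : ℝ) / phiS s d * (moebius (q / d) : ℝ)))
      (fun d hd => hasSum_divisor_term hs q d hq hd)
    exact (funext key : f = _) ▸ this
  have htend := hsum.tendsto_sum_nat.comp (tendsto_add_atTop_nat 1)
  apply htend.congr
  intro x
  simp only [Function.comp_apply]
  refine (Finset.sum_subset ?_ ?_).symm
  · intro n hn
    simp only [Finset.mem_Icc] at hn
    simp only [Finset.mem_range]
    omega
  · intro n hn hnn
    simp only [Finset.mem_range] at hn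
    simp only [Finset.mem_Icc] at hnn
    have : n = 0 := by omega
    subst this
    simp [hf]
end

section
/- Let f : ℕ → ℂ be an arithmetic function satisfying Σ_{q=1}^∞ |(f*1)(q)|·τ(q)/q < ∞, where 1 is the constant-one function and τ the divisor-counting function. Then for every positive integer q, f(q) = Σ_{n=1}^∞ a(n)·c_q(n), where a(n) = Σ_{m=1}^∞ (f*1)(nm)·μ(m)/(nm), all series being convergent. -/
open Finset Filter Topology

private def mulMap : ℕ+ × ℕ+ → ℕ := fun p => (p.1 : ℕ) * (p.2 : ℕ)

private lemma mulMap_ne_zero (p : ℕ+ × ℕ+) : mulMap p ≠ 0 :=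
  Nat.mul_ne_zero p.1.ne_zero p.2.ne_zero

private def fiberEquiv (r : ℕ) (hr : r ≠ 0) :
    {p : ℕ+ × ℕ+ // mulMap p = r} ≃ {x : ℕ × ℕ // x ∈ r.divisorsAntidiagonal} where
  toFun p := ⟨((p.1.1 : ℕ), (p.1.2 : ℕ)), by
    rw [Nat.mem_divisorsAntidiagonal]; exact ⟨p.2, hr⟩⟩
  invFun x := ⟨(⟨x.1.1, Nat.pos_of_ne_zero (Nat.left_ne_zero_of_mem_divisorsAntidiagonal x.2)⟩,
      ⟨x.1.2, Nat.pos_of_ne_zero (Nat.right_ne_zero_of_mem_divisorsAntidiagonal x.2)⟩),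
    (Nat.mem_divisorsAntidiagonal.mp x.2).1⟩
  left_inv p := rfl
  right_inv x := rfl

private lemma fiber_finite (r : ℕ) : Finite {p : ℕ+ × ℕ+ // mulMap p = r} := by
  rcases eq_or_ne r 0 with rfl | hr
  · have : IsEmpty {p : ℕ+ × ℕ+ // mulMap p = 0} := ⟨fun p => mulMap_ne_zero p.1 p.2⟩
    infer_instance
  · exact Finite.of_equiv _ (fiberEquiv r hr).symm

private lemma fiber_card (r : ℕ) (hr : r ≠ 0) :
    Nat.card {p : ℕ+ × ℕ+ // mulMap p = r} = r.divisors.card := by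
  rw [Nat.card_congr (fiberEquiv r hr), Nat.card_eq_fintype_card, Fintype.card_coe,
    ← Nat.map_div_right_divisors, Finset.card_map]

private lemma sum_divisors_moebius (r : ℕ) :
    (∑ i ∈ r.divisors, ArithmeticFunction.moebius i : ℤ) = if r = 1 then 1 else 0 := by
  have h := ArithmeticFunction.coe_mul_zeta_apply (R := ℤ)
    (f := ArithmeticFunction.moebius) (x := r)
  rw [ArithmeticFunction.moebius_mul_coe_zeta] at h
  rw [← h, ArithmeticFunction.one_apply]

private lemma master (g : ℕ → ℂ)
    (hg : Summable fun n : ℕ+ => ‖g n‖ * (n : ℕ).divisors.card / (n : ℕ))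
    (d : ℕ) (hd : d ≠ 0) :
    Summable (fun p : ℕ+ × ℕ+ =>
        g (d * mulMap p) * (ArithmeticFunction.moebius (p.2 : ℕ) : ℂ) / ((d * mulMap p : ℕ) : ℂ))
      ∧ HasSum (fun p : ℕ+ × ℕ+ =>
        g (d * mulMap p) * (ArithmeticFunction.moebius (p.2 : ℕ) : ℂ) / ((d * mulMap p : ℕ) : ℂ))
        (g d / (d : ℂ)) := by
  set H : ℕ → ℝ := fun n => ‖g n‖ * n.divisors.card / n with hHdef
  have hHnn : ∀ n, 0 ≤ H n := fun n => by positivity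
  have hH : Summable H := by
    refine (Function.Injective.summable_iff (g := fun n : ℕ+ => (n : ℕ))
      (fun a b h => PNat.coe_injective h) ?_).mp hg
    intro x hx
    have hx0 : x = 0 := by
      by_contra h
      exact hx ⟨⟨x, Nat.pos_of_ne_zero h⟩, rfl⟩
    subst hx0
    simp [hHdef]
  have hHd : Summable fun r : ℕ => H (d * r) :=
    hH.comp_injective fun a b h => by
      simpa using mul_left_cancel₀ hd (h : d * a = d * b)
  set B : ℕ+ × ℕ+ → ℝ := fun p => ‖g (d * mulMap p)‖ / (d * mulMap p) with hBdef
  have hBnn : ∀ p, 0 ≤ B p := fun p => by positivity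
  haveI : ∀ r : ℕ, Finite {p : ℕ+ × ℕ+ // mulMap p = r} := fiber_finite
  have hBsum : Summable B := by
    rw [← (Equiv.sigmaFiberEquiv mulMap).summable_iff]
    refine (summable_sigma_of_nonneg fun x => hBnn _).mpr ⟨fun r => Summable.of_finite, ?_⟩
    refine Summable.of_nonneg_of_le (fun r => tsum_nonneg fun c => hBnn _) ?_ hHd
    intro r
    rcases eq_or_ne r 0 with rfl | hr
    · haveI : IsEmpty {p : ℕ+ × ℕ+ // mulMap p = 0} := ⟨fun p => mulMap_ne_zero p.1 p.2⟩
      rw [tsum_empty]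
      exact hHnn _
    · have hconst : ∀ c : {p : ℕ+ × ℕ+ // mulMap p = r},
          B ((Equiv.sigmaFiberEquiv mulMap) ⟨r, c⟩) = ‖g (d * r)‖ / (d * r) := by
        intro c
        simp only [Equiv.sigmaFiberEquiv, Equiv.coe_fn_mk, hBdef]
        rw [c.2]
      rw [tsum_congr hconst, tsum_const, fiber_card r hr, nsmul_eq_mul]
      have hcard : (r.divisors.card : ℝ) ≤ ((d * r).divisors.card : ℝ) := by
        exact_mod_cast Finset.card_le_card
          (Nat.divisors_subset_of_dvd (mul_ne_zero hd hr) (dvd_mul_left r d))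
      have hA : (0:ℝ) ≤ ‖g (d * r)‖ := by positivity
      calc (r.divisors.card : ℝ) * (‖g (d * r)‖ / (d * r))
          = ‖g (d*r)‖ * (r.divisors.card : ℝ) / ((d*r : ℕ) : ℝ) := by
            push_cast; ring
        _ ≤ ‖g (d*r)‖ * (((d*r : ℕ).divisors.card : ℝ)) / ((d*r : ℕ) : ℝ) := by
            gcongr
        _ = H (d*r) := by rw [hHdef]
  set G : ℕ+ × ℕ+ → ℂ := fun p =>
    g (d * mulMap p) * (ArithmeticFunction.moebius (p.2 : ℕ) : ℂ) / ((d * mulMap p : ℕ) : ℂ)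
    with hGdef
  have hGsum : Summable G := by
    refine Summable.of_norm_bounded hBsum ?_
    intro p
    rw [hGdef]
    simp only
    rw [norm_div, norm_mul, Complex.norm_natCast]
    have h1 : ‖((ArithmeticFunction.moebius (p.2 : ℕ) : ℤ) : ℂ)‖ ≤ 1 := by
      rw [Complex.norm_intCast]
      exact_mod_cast ArithmeticFunction.abs_moebius_le_one
    have h2 : ‖g (d * mulMap p)‖ = ‖g (d * mulMap p)‖ := rfl
    rw [hBdef]
    simp only
    push_cast
    rw [h2] at *
    calc ‖g (d * mulMap p)‖ * ‖((ArithmeticFunction.moebius (p.2 : ℕ) : ℤ) : ℂ)‖ /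
          ((d : ℝ) * (mulMap p : ℝ))
        ≤ ‖g (d * mulMap p)‖ * 1 / ((d : ℝ) * (mulMap p : ℝ)) := by
          gcongr
      _ = ‖g (d * mulMap p)‖ / ((d:ℝ) * (mulMap p : ℝ)) := by ring
  refine ⟨hGsum, ?_⟩
  have hfib := hGsum.hasSum.tsum_fiberwise mulMap
  have heq : (fun r : ℕ => ∑' (p : mulMap ⁻¹' {r}), G p)
      = fun r => if r = 1 then g d / (d : ℂ) else 0 := by
    funext r
    rcases eq_or_ne r 0 with rfl | hr
    · haveI : IsEmpty ↥(mulMap ⁻¹' {(0:ℕ)}) := ⟨fun p => mulMap_ne_zero p.1 p.2⟩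
      rw [tsum_empty]
      simp
    · have h1 : ∑' (p : mulMap ⁻¹' {r}), G p
          = ∑' (x : {x : ℕ × ℕ // x ∈ r.divisorsAntidiagonal}), G ((fiberEquiv r hr).symm x) :=
        ((fiberEquiv r hr).symm.tsum_eq (fun p : {p : ℕ+ × ℕ+ // mulMap p = r} => G p)).symm
      rw [h1]
      have h2 : ∀ x : {x : ℕ × ℕ // x ∈ r.divisorsAntidiagonal},
          G ((fiberEquiv r hr).symm x) = g (d * r) * (ArithmeticFunction.moebius ((x : ℕ × ℕ).2) : ℂ)
            / ((d * r : ℕ) : ℂ) := by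
        intro x
        have hmm : mulMap ((fiberEquiv r hr).symm x).1 = r := ((fiberEquiv r hr).symm x).2
        rw [hGdef]
        simp only
        rw [hmm]
        rfl
      rw [tsum_congr h2, Finset.tsum_subtype (r.divisorsAntidiagonal)
        (fun y : ℕ × ℕ => g (d*r) * (ArithmeticFunction.moebius y.2 : ℂ) / ((d*r : ℕ) : ℂ))]
      rw [Nat.sum_divisorsAntidiagonal'
        (f := fun a b => g (d*r) * (ArithmeticFunction.moebius b : ℂ) / ((d*r : ℕ):ℂ))]
      have h3 : (∑ i ∈ r.divisors, (ArithmeticFunction.moebius i : ℂ))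
          = ((if r = 1 then 1 else 0 : ℤ) : ℂ) := by
        rw [← sum_divisors_moebius r]; push_cast; rfl
      calc ∑ i ∈ r.divisors, g (d*r) * (ArithmeticFunction.moebius i : ℂ) / ((d*r:ℕ):ℂ)
          = (g (d*r) / ((d*r:ℕ):ℂ)) * ∑ i ∈ r.divisors, (ArithmeticFunction.moebius i : ℂ) := by
            rw [Finset.mul_sum]
            exact Finset.sum_congr rfl fun i _ => by ring
        _ = if r = 1 then g d / (d:ℂ) else 0 := by
            rw [h3]
            split_ifs with h
            · subst h; simp
            · simp
  have h2' : HasSum (fun r : ℕ => if r = 1 then g d / (d:ℂ) else 0) (∑' p, G p) := heq ▸ hfib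
  have hval : (∑' p, G p) = g d / (d:ℂ) := h2'.unique (hasSum_ite_eq 1 (g d / (d:ℂ)))
  exact hval ▸ hGsum.hasSum

private lemma part2 (f : ℕ → ℂ)
    (hf : Summable (fun n : ℕ+ =>
      ‖∑ d ∈ (n : ℕ).divisors, f d‖ * (n : ℕ).divisors.card / (n : ℕ)))
    (q : ℕ) (hq : 0 < q) (A : ℕ → ℂ)
    (hA : ∀ n : ℕ, A n = ∑' m : ℕ+, (∑ d ∈ (n * (m : ℕ)).divisors, f d) *
        (ArithmeticFunction.moebius (m : ℕ) : ℂ) / (n * (m : ℕ))) :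
    Tendsto (fun x : ℕ => ∑ n ∈ Finset.Icc 1 x, A n * (ramanujanSum q n : ℂ))
      atTop (𝓝 (f q)) := by
  classical
  set g : ℕ → ℂ := fun k => ∑ d ∈ k.divisors, f d with hgdef
  have hmaster := master g hf
  set G : ℕ → ℕ+ × ℕ+ → ℂ := fun e p =>
    g (e * mulMap p) * (ArithmeticFunction.moebius (p.2 : ℕ) : ℂ) / ((e * mulMap p : ℕ) : ℂ)
    with hGdef
  have hGsum : ∀ e : ℕ, e ≠ 0 → Summable (G e) := fun e he => (hmaster e he).1
  have hGhas : ∀ e : ℕ, e ≠ 0 → HasSum (G e) (g e / (e : ℂ)) := fun e he => (hmaster e he).2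
  -- bridging
  have hAek : ∀ (e : ℕ), e ≠ 0 → ∀ k : ℕ+,
      A (e * (k : ℕ)) = ∑' m : ℕ+, G e (k, m) := by
    intro e he k
    rw [hA]
    refine tsum_congr fun m => ?_
    rw [hGdef]
    simp only [mulMap, hgdef]
    rw [← mul_assoc]
    push_cast
    ring_nf
  have hA1 : ∀ n : ℕ+, A (n : ℕ) = ∑' m : ℕ+, G 1 (n, m) := by
    intro n
    have := hAek 1 one_ne_zero n
    rwa [one_mul] at this
  have hnorm1 : Summable (fun p : ℕ+ × ℕ+ => ‖G 1 p‖) :=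
    summable_norm_iff.mpr (hGsum 1 one_ne_zero)
  have habsA : Summable (fun n : ℕ+ => ∑' m : ℕ+, ‖G 1 (n, m)‖) := hnorm1.prod
  have hAbound : ∀ n : ℕ+, ‖A (n : ℕ)‖ ≤ ∑' m : ℕ+, ‖G 1 (n, m)‖ := by
    intro n
    rw [hA1 n]
    exact norm_tsum_le_tsum_norm (hnorm1.prod_factor n)
  set C : ℝ := ∑ e ∈ q.divisors, (e : ℝ) with hCdef
  have hR : ∀ n : ℕ+, ‖(ramanujanSum q n : ℂ)‖ ≤ C := by
    intro n
    have h1 : |ramanujanSum q (n : ℕ)| ≤ ∑ e ∈ q.divisors, (e : ℤ) := by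
      calc |ramanujanSum q (n : ℕ)|
          ≤ ∑ e ∈ (Nat.gcd q (n : ℕ)).divisors, |ArithmeticFunction.moebius (q / e) * (e : ℤ)| :=
            Finset.abs_sum_le_sum_abs _ _
        _ ≤ ∑ e ∈ (Nat.gcd q (n : ℕ)).divisors, (e : ℤ) := by
            refine Finset.sum_le_sum fun e _ => ?_
            rw [abs_mul]
            calc |ArithmeticFunction.moebius (q / e)| * |(e : ℤ)|
                ≤ 1 * |(e : ℤ)| := by
                  gcongr
                  exact ArithmeticFunction.abs_moebius_le_one
              _ = (e : ℤ) := by rw [one_mul, abs_of_nonneg (Int.natCast_nonneg e)]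
        _ ≤ ∑ e ∈ q.divisors, (e : ℤ) := by
            refine Finset.sum_le_sum_of_subset_of_nonneg ?_ fun i _ _ => Int.natCast_nonneg i
            exact Nat.divisors_subset_of_dvd hq.ne' (Nat.gcd_dvd_left q (n : ℕ))
    calc ‖((ramanujanSum q (n : ℕ) : ℤ) : ℂ)‖ = |((ramanujanSum q (n : ℕ) : ℤ) : ℝ)| := by
          rw [Complex.norm_intCast]
      _ = ((|ramanujanSum q (n : ℕ)| : ℤ) : ℝ) := by rw [Int.cast_abs]
      _ ≤ ((∑ e ∈ q.divisors, (e : ℤ) : ℤ) : ℝ) := by exact_mod_cast h1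
      _ = C := by rw [hCdef]; push_cast; rfl
  have hFsumP : Summable (fun n : ℕ+ => A (n : ℕ) * (ramanujanSum q (n : ℕ) : ℂ)) := by
    refine Summable.of_norm_bounded
      (habsA.mul_right C) ?_
    intro n
    rw [norm_mul]
    exact mul_le_mul (hAbound n) (hR n) (norm_nonneg _) (tsum_nonneg fun m => norm_nonneg _)
  -- Ramanujan sum expansion
  have hc : ∀ n : ℕ+, (ramanujanSum q (n : ℕ) : ℂ) = ∑ e ∈ q.divisors,
      (if e ∣ (n : ℕ) then (ArithmeticFunction.moebius (q / e) : ℂ) * e else 0) := by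
    intro n
    have hz : ramanujanSum q (n : ℕ) = ∑ e ∈ q.divisors,
        (if e ∣ (n : ℕ) then ArithmeticFunction.moebius (q / e) * (e : ℤ) else 0) := by
      rw [ramanujanSum]
      have hdiv : (Nat.gcd q (n : ℕ)).divisors = q.divisors.filter (· ∣ (n : ℕ)) := by
        ext a
        simp only [Nat.mem_divisors, Finset.mem_filter, Nat.dvd_gcd_iff]
        constructor
        · rintro ⟨⟨h1, h2⟩, _⟩; exact ⟨⟨h1, hq.ne'⟩, h2⟩
        · rintro ⟨⟨h1, _⟩, h2⟩
          exact ⟨⟨h1, h2⟩, (Nat.gcd_pos_of_pos_left _ hq).ne'⟩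
      rw [hdiv, Finset.sum_filter]
    rw [hz]
    push_cast [apply_ite (fun z : ℤ => (z : ℂ))]
    rfl
  -- key identity
  have hKey : (∑' n : ℕ+, A (n : ℕ) * (ramanujanSum q (n : ℕ) : ℂ)) = f q := by
    have step1 : (∑' n : ℕ+, A (n : ℕ) * (ramanujanSum q (n : ℕ) : ℂ))
        = ∑' n : ℕ+, ∑ e ∈ q.divisors,
            (if e ∣ (n : ℕ) then A (n : ℕ) * ((ArithmeticFunction.moebius (q / e) : ℂ) * e)
              else 0) := by
      refine tsum_congr fun n => ?_
      rw [hc n, Finset.mul_sum]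
      exact Finset.sum_congr rfl fun e _ => by rw [mul_ite, mul_zero]
    rw [step1]
    have hsum_e : ∀ e ∈ q.divisors, Summable (fun n : ℕ+ =>
        if e ∣ (n : ℕ) then A (n : ℕ) * ((ArithmeticFunction.moebius (q / e) : ℂ) * e) else 0) := by
      intro e _
      refine Summable.of_norm_bounded
        (habsA.mul_right ‖(ArithmeticFunction.moebius (q / e) : ℂ) * (e : ℂ)‖) ?_
      intro n
      split_ifs
      · rw [norm_mul]
        exact mul_le_mul_of_nonneg_right (hAbound n) (norm_nonneg _)
      · simp only [norm_zero]
        exact mul_nonneg (tsum_nonneg fun m => norm_nonneg _) (norm_nonneg _)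
    rw [Summable.tsum_finsetSum hsum_e]
    have hterm : ∀ e ∈ q.divisors,
        (∑' n : ℕ+, if e ∣ (n : ℕ) then A (n : ℕ) *
            ((ArithmeticFunction.moebius (q / e) : ℂ) * e) else 0)
          = (ArithmeticFunction.moebius (q / e) : ℂ) * g e := by
      intro e he
      obtain ⟨hdvd, -⟩ := Nat.mem_divisors.mp he
      have epos : 0 < e := Nat.pos_of_dvd_of_pos hdvd hq
      set E : ℕ+ := ⟨e, epos⟩ with hEdef
      set c : ℂ := (ArithmeticFunction.moebius (q / e) : ℂ) * e with hcdef
      have hinj : Function.Injective (fun k : ℕ+ => E * k) := fun a b h => by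
        exact mul_left_cancel h
      have hsupp : Function.support (fun n : ℕ+ => if e ∣ (n : ℕ) then A (n : ℕ) * c else 0)
          ⊆ Set.range (fun k : ℕ+ => E * k) := by
        intro n hn
        have hd : e ∣ (n : ℕ) := by
          by_contra hcon
          exact hn (if_neg hcon)
        have hpos : 0 < (n : ℕ) / e := Nat.div_pos (Nat.le_of_dvd n.pos hd) epos
        refine ⟨⟨(n : ℕ) / e, hpos⟩, ?_⟩
        apply PNat.coe_injective
        show (e * ((n : ℕ) / e) : ℕ) = (n : ℕ)
        exact Nat.mul_div_cancel' hd
      have h4 := hinj.tsum_eq (f := fun n : ℕ+ => if e ∣ (n : ℕ) then A (n : ℕ) * c else 0) hsupp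
      rw [← h4]
      have h5 : ∀ k : ℕ+, (if e ∣ ((E * k : ℕ+) : ℕ) then A ((E * k : ℕ+) : ℕ) * c else 0)
          = A (e * (k : ℕ)) * c := by
        intro k
        have hco : ((E * k : ℕ+) : ℕ) = e * (k : ℕ) := rfl
        rw [hco, if_pos (dvd_mul_right e (k : ℕ))]
      rw [tsum_congr h5, tsum_mul_right]
      have h6 : (∑' k : ℕ+, A (e * (k : ℕ))) = g e / (e : ℂ) := by
        rw [tsum_congr (hAek e epos.ne')]
        rw [← Summable.tsum_prod (hGsum e epos.ne')]
        exact (hGhas e epos.ne').tsum_eq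
      rw [h6, hcdef]
      have he0 : (e : ℂ) ≠ 0 := Nat.cast_ne_zero.mpr epos.ne'
      field_simp
    rw [Finset.sum_congr rfl hterm]
    have hmob := (ArithmeticFunction.sum_eq_iff_sum_mul_moebius_eq (R := ℂ)
      (f := f) (g := g)).mp (fun n _ => rfl) q hq
    rw [Nat.sum_divisorsAntidiagonal'
      (f := fun a b => (ArithmeticFunction.moebius a : ℂ) * g b)] at hmob
    exact hmob
  -- assembling the limit
  set F : ℕ → ℂ := fun n => A n * (ramanujanSum q n : ℂ) with hFdef
  have hA0 : A 0 = 0 := by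
    rw [hA]
    have hz : ∀ m : ℕ+, (∑ d ∈ ((0 : ℕ) * (m : ℕ)).divisors, f d) *
        (ArithmeticFunction.moebius (m : ℕ) : ℂ) / ((0 : ℕ) * (m : ℕ)) = 0 := by
      intro m; simp
    rw [tsum_congr hz, tsum_zero]
  have hF0 : F 0 = 0 := by rw [hFdef]; simp [hA0]
  have hi : Function.Injective (fun n : ℕ+ => (n : ℕ)) := fun a b h => PNat.coe_injective h
  have hzero : ∀ x ∉ Set.range (fun n : ℕ+ => (n : ℕ)), F x = 0 := by
    intro x hx
    have hx0 : x = 0 := by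
      by_contra h
      exact hx ⟨⟨x, Nat.pos_of_ne_zero h⟩, rfl⟩
    rw [hx0, hF0]
  have hsupp2 : Function.support F ⊆ Set.range (fun n : ℕ+ => (n : ℕ)) := by
    intro x hx
    by_contra h
    exact hx (hzero x h)
  have hFsum : Summable F := (hi.summable_iff hzero).mp hFsumP
  have htsum : (∑' n : ℕ, F n) = f q := by
    rw [← hi.tsum_eq hsupp2]
    exact hKey
  have hhs : HasSum F (f q) := htsum ▸ hFsum.hasSum
  have htend := hhs.tendsto_sum_nat
  have hfun : (fun x : ℕ => ∑ n ∈ Finset.Icc 1 x, F n)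
      = (fun x : ℕ => ∑ i ∈ Finset.range x, F i) ∘ (fun x => x + 1) := by
    funext x
    have hr : Finset.range (x + 1) = insert 0 (Finset.Icc 1 x) := by
      ext y
      simp only [Finset.mem_range, Finset.mem_insert, Finset.mem_Icc, Nat.lt_succ_iff]
      omega
    simp only [Function.comp_apply]
    rw [hr, Finset.sum_insert (by simp), hF0, zero_add]
  have hgoal : (fun x : ℕ => ∑ n ∈ Finset.Icc 1 x, A n * (ramanujanSum q n : ℂ))
      = fun x : ℕ => ∑ n ∈ Finset.Icc 1 x, F n := by
    funext x
    exact Finset.sum_congr rfl fun n _ => by rw [hFdef]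
  rw [hgoal, hfun]
  exact htend.comp (tendsto_add_atTop_nat 1)

theorem dual_delange (f : ℕ → ℂ)
    (hf : Summable (fun n : ℕ+ =>
      ‖∑ d ∈ (n : ℕ).divisors, f d‖ * (n : ℕ).divisors.card / (n : ℕ))) :
    (∀ n : ℕ, 0 < n → Summable (fun m : ℕ+ =>
        (∑ d ∈ (n * (m : ℕ)).divisors, f d) * (ArithmeticFunction.moebius (m : ℕ) : ℂ) /
          (n * (m : ℕ)))) ∧
    ∀ q : ℕ, 0 < q →
      Tendsto (fun x : ℕ => ∑ n ∈ Finset.Icc 1 x,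
          (∑' m : ℕ+, (∑ d ∈ (n * (m : ℕ)).divisors, f d) *
            (ArithmeticFunction.moebius (m : ℕ) : ℂ) / (n * (m : ℕ))) *
          (ramanujanSum q n : ℂ)) atTop (𝓝 (f q)) := by
  constructor
  · intro n hn
    have h := ((master (fun k => ∑ d ∈ k.divisors, f d) hf n hn.ne').1).prod_factor 1
    refine h.congr ?_
    intro m
    simp only [mulMap, PNat.one_coe, one_mul, Nat.cast_mul]
  · intro q hq
    exact part2 f hf q hq
      (fun n => ∑' m : ℕ+, (∑ d ∈ (n * (m : ℕ)).divisors, f d) *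
        (ArithmeticFunction.moebius (m : ℕ) : ℂ) / (n * (m : ℕ)))
      (fun n => rfl)
end

section
/- For every positive integer q, (φ(q)/q)·λ(q) = (1/ζ(2))·Σ_{n=1}^∞ (I_{square}(n)/n)·c_q(n), where I_{square}(n) = 1 if n is a perfect square and 0 otherwise; equivalently (φ(q)/q)·λ(q) = (1/ζ(2))·Σ_{m=1}^∞ c_q(m²)/m². -/
open Finset Filter Topology

/-- The Liouville function `λ(n) = (-1)^Ω(n)`. -/
noncomputable def liouville (n : ℕ) : ℤ := (-1) ^ (ArithmeticFunction.cardFactors n)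

namespace DualRF

lemma ceilRoot_two_ne_zero {d : ℕ} (hd : d ≠ 0) : Nat.ceilRoot 2 d ≠ 0 :=
  Nat.ceilRoot_ne_zero.2 ⟨two_ne_zero, hd⟩

lemma ceilRoot_two_mul {a b : ℕ} (ha : a ≠ 0) (hb : b ≠ 0) (hab : Nat.Coprime a b) :
    Nat.ceilRoot 2 (a * b) = Nat.ceilRoot 2 a * Nat.ceilRoot 2 b := by
  unfold Nat.ceilRoot
  rw [if_neg (by simp [ha, hb]), if_neg (by simp [ha]), if_neg (by simp [hb]),
    Nat.factorization_mul ha hb, Finsupp.prod_add_index_of_disjoint]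
  rw [Nat.support_factorization, Nat.support_factorization]
  exact hab.disjoint_primeFactors

lemma ceilRoot_two_prime_pow {p : ℕ} (hp : p.Prime) (a : ℕ) :
    Nat.ceilRoot 2 (p ^ a) = p ^ ((a + 1) / 2) := by
  rcases Nat.eq_zero_or_pos a with rfl | ha
  · simpa using Nat.ceilRoot_one_right two_ne_zero
  · unfold Nat.ceilRoot
    rw [if_neg (by simp [hp.ne_zero, pow_ne_zero]), hp.factorization_pow,
      Finsupp.prod_single_index (by norm_num)]
    congr 1

lemma dvd_sq_iff {d m : ℕ} : d ∣ m ^ 2 ↔ Nat.ceilRoot 2 d ∣ m :=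
  Nat.dvd_pow_iff_ceilRoot_dvd two_ne_zero

noncomputable def G : ArithmeticFunction ℝ :=
  ⟨fun n => (n : ℝ) / (Nat.ceilRoot 2 n : ℝ) ^ 2, by simp⟩

lemma G_apply (n : ℕ) : G n = (n : ℝ) / (Nat.ceilRoot 2 n : ℝ) ^ 2 := rfl

lemma G_mult : G.IsMultiplicative := by
  constructor
  · rw [G_apply, Nat.ceilRoot_one_right two_ne_zero]; norm_num
  · intro m n h
    rcases eq_or_ne m 0 with rfl | hm
    · rcases Nat.coprime_zero_left n |>.1 h with rfl
      simp [G_apply, Nat.ceilRoot_one_right two_ne_zero]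
    rcases eq_or_ne n 0 with rfl | hn
    · rcases Nat.coprime_zero_right m |>.1 h with rfl
      simp [G_apply, Nat.ceilRoot_one_right two_ne_zero]
    rw [G_apply, G_apply, G_apply, ceilRoot_two_mul hm hn h]
    push_cast
    rw [mul_pow, mul_div_mul_comm]

lemma G_prime_pow {p : ℕ} (hp : p.Prime) (j : ℕ) :
    G (p ^ j) = if Even j then 1 else 1 / (p : ℝ) := by
  have hp0 : (p : ℝ) ≠ 0 := Nat.cast_ne_zero.2 hp.ne_zero
  rw [G_apply, ceilRoot_two_prime_pow hp]
  push_cast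
  rw [← pow_mul]
  rcases Nat.even_or_odd j with hj | hj
  · obtain ⟨c, rfl⟩ := hj
    rw [if_pos (Even.add_self c)]
    have : (c + c + 1) / 2 * 2 = c + c := by omega
    rw [this, div_self (pow_ne_zero _ hp0)]
  · obtain ⟨c, rfl⟩ := hj
    rw [if_neg (by simp [parity_simps])]
    have : (2 * c + 1 + 1) / 2 * 2 = (2 * c + 1) + 1 := by omega
    rw [this]
    rw [div_eq_div_iff (by positivity) (by positivity)]
    rw [pow_succ]
    ring

noncomputable def H : ArithmeticFunction ℝ :=
  ⟨fun n => (Nat.totient n : ℝ) / n * (liouville n : ℝ), by simp⟩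

lemma H_apply (n : ℕ) : H n = (Nat.totient n : ℝ) / n * (liouville n : ℝ) := rfl

lemma H_mult : H.IsMultiplicative := by
  constructor
  · simp [H_apply, liouville]
  · intro m n h
    rcases eq_or_ne m 0 with rfl | hm
    · rcases Nat.coprime_zero_left n |>.1 h with rfl
      simp [H_apply, liouville]
    rcases eq_or_ne n 0 with rfl | hn
    · rcases Nat.coprime_zero_right m |>.1 h with rfl
      simp [H_apply, liouville]
    rw [H_apply, H_apply, H_apply, liouville, liouville, liouville,
      Nat.totient_mul h, ArithmeticFunction.cardFactors_mul hm hn]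
    push_cast
    ring

noncomputable def muR : ArithmeticFunction ℝ := ↑(ArithmeticFunction.moebius)

lemma muR_apply (n : ℕ) : muR n = ((ArithmeticFunction.moebius n : ℤ) : ℝ) := rfl

lemma muR_mult : muR.IsMultiplicative :=
  ArithmeticFunction.isMultiplicative_moebius.intCast

lemma muG_eq : muR * G = H := by
  rw [ArithmeticFunction.IsMultiplicative.eq_iff_eq_on_prime_powers _ (muR_mult.mul G_mult) _
    H_mult]
  intro p i hp
  have hp0 : (p : ℝ) ≠ 0 := Nat.cast_ne_zero.2 hp.ne_zero
  have hp1 : (1:ℝ) < p := by exact_mod_cast hp.one_lt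
  rcases Nat.eq_zero_or_pos i with rfl | hi
  · simp [(muR_mult.mul G_mult).map_one, H_mult.map_one]
  obtain ⟨k, rfl⟩ : ∃ k, i = k + 1 := ⟨i - 1, by omega⟩
  rw [ArithmeticFunction.mul_apply,
    Nat.sum_divisorsAntidiagonal' (f := fun a b => muR a * G b),
    Nat.sum_divisors_prime_pow hp, Finset.sum_range_succ, Finset.sum_range_succ]
  have hsmall : ∀ j ∈ Finset.range k, muR (p ^ (k + 1) / p ^ j) * G (p ^ j) = 0 := by
    intro j hj
    rw [Finset.mem_range] at hj
    rw [Nat.pow_div (by omega) hp.pos, muR_apply,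
      ArithmeticFunction.moebius_apply_prime_pow hp (by omega), if_neg (by omega)]
    simp
  rw [Finset.sum_congr rfl hsmall, Finset.sum_const_zero, zero_add]
  rw [Nat.pow_div (by omega) hp.pos, Nat.pow_div le_rfl hp.pos, Nat.sub_self, pow_zero,
    show k + 1 - k = 1 by omega, pow_one]
  rw [muR_mult.map_one, one_mul, muR_apply, ArithmeticFunction.moebius_apply_prime hp]
  rw [G_prime_pow hp, G_prime_pow hp, H_apply, liouville,
    ArithmeticFunction.cardFactors_apply_prime_pow hp,
    Nat.totient_prime_pow hp (by omega)]
  push_cast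
  rcases Nat.even_or_odd k with hk | hk
  · rw [if_pos hk, if_neg (by simpa [parity_simps] using hk), (by simpa [parity_simps] using hk :
      Odd (k + 1)).neg_one_pow]
    rw [Nat.cast_sub hp.one_le]
    push_cast
    field_simp
    ring
  · rw [if_neg (by simpa [Nat.not_even_iff_odd] using hk), if_pos (by simpa [parity_simps]
      using hk), (by simpa [parity_simps] using hk : Even (k + 1)).neg_one_pow]
    rw [Nat.cast_sub hp.one_le]
    push_cast
    field_simp
    ring

lemma key {q : ℕ} (hq : q ≠ 0) :
    ∑ d ∈ q.divisors, ((ArithmeticFunction.moebius (q / d) : ℤ) : ℝ) * d /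
        (Nat.ceilRoot 2 d : ℝ) ^ 2 =
      (Nat.totient q : ℝ) / q * (liouville q : ℝ) := by
  have h := congrArg (fun f : ArithmeticFunction ℝ => f q) muG_eq
  replace h : (muR * G) q = H q := h
  rw [ArithmeticFunction.mul_apply,
    Nat.sum_divisorsAntidiagonal' (f := fun a b => muR a * G b)] at h
  rw [← H_apply, ← h]
  refine Finset.sum_congr rfl fun d hd => ?_
  rw [muR_apply, G_apply, mul_div_assoc]


lemma basel_Icc : Tendsto (fun N : ℕ => ∑ k ∈ Icc 1 N, 1 / (k : ℝ) ^ 2) atTop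
    (𝓝 (Real.pi ^ 2 / 6)) := by
  have h := hasSum_zeta_two.tendsto_sum_nat
  have h2 : Tendsto (fun N : ℕ => ∑ k ∈ Finset.range (N + 1), 1 / (k : ℝ) ^ 2) atTop
      (𝓝 (Real.pi ^ 2 / 6)) := h.comp (tendsto_add_atTop_nat 1)
  refine h2.congr fun N => ?_
  rw [show Finset.range (N + 1) = insert 0 (Finset.Icc 1 N) by ext m; simp; omega,
    Finset.sum_insert (by simp)]
  norm_num

lemma tendsto_nat_div_atTop {s : ℕ} (hs : 0 < s) :
    Tendsto (fun M : ℕ => M / s) atTop atTop := by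
  refine tendsto_atTop_atTop.2 fun b => ⟨b * s, fun a ha => ?_⟩
  exact (Nat.le_div_iff_mul_le hs).2 ha

lemma inner_eq {d : ℕ} (hd : d ≠ 0) (M : ℕ) :
    ∑ m ∈ Icc 1 M, (if d ∣ m ^ 2 then 1 / (m : ℝ) ^ 2 else 0)
      = (1 / (Nat.ceilRoot 2 d : ℝ) ^ 2) *
          ∑ k ∈ Icc 1 (M / Nat.ceilRoot 2 d), 1 / (k : ℝ) ^ 2 := by
  set s := Nat.ceilRoot 2 d with hs
  have hs0 : 0 < s := Nat.pos_of_ne_zero (ceilRoot_two_ne_zero hd)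
  have e1 : ∑ m ∈ Icc 1 M, (if d ∣ m ^ 2 then 1 / (m : ℝ) ^ 2 else 0)
      = ∑ m ∈ (Icc 1 M).filter (fun m => s ∣ m), 1 / (m : ℝ) ^ 2 := by
    rw [Finset.sum_filter]
    exact Finset.sum_congr rfl fun m _ => if_congr dvd_sq_iff rfl rfl
  rw [e1, Finset.mul_sum]
  symm
  refine Finset.sum_nbij' (i := fun k => k * s) (j := fun m => m / s) ?_ ?_ ?_ ?_ ?_
  · intro k hk
    simp only [Finset.mem_Icc, Finset.mem_filter] at *
    exact ⟨⟨Nat.one_le_iff_ne_zero.2 (Nat.mul_ne_zero (by omega) (by omega)),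
      (Nat.le_div_iff_mul_le hs0).1 hk.2⟩, dvd_mul_left s k⟩
  · intro m hm
    simp only [Finset.mem_Icc, Finset.mem_filter] at *
    obtain ⟨⟨h1, h2⟩, hdvd⟩ := hm
    exact ⟨(Nat.one_le_div_iff hs0).2 (Nat.le_of_dvd (by omega) hdvd),
      Nat.div_le_div_right h2⟩
  · intro k hk
    exact Nat.mul_div_cancel _ hs0
  · intro m hm
    simp only [Finset.mem_filter] at hm
    exact Nat.div_mul_cancel hm.2
  · intro k hk
    push_cast
    rw [mul_pow, one_div, one_div, one_div, mul_inv]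
    ring

end DualRF

theorem dual_rf_totient_liouville (q : ℕ) (hq : 0 < q) :
    Tendsto (fun x : ℕ => ∑ n ∈ Finset.Icc 1 x,
        (if IsSquare n then (1 : ℝ) / n else 0) * (ramanujanSum q n : ℝ))
      atTop
      (𝓝 (Real.pi ^ 2 / 6 * ((Nat.totient q : ℝ) / q * (liouville q : ℝ)))) := by
  classical
  set Q : ℕ → ℝ := fun M => ∑ m ∈ Icc 1 M,
    1 / (m : ℝ) ^ 2 * ((ramanujanSum q (m ^ 2) : ℤ) : ℝ) with hQdef
  -- Step 1 : reindexing squares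
  have hP : ∀ x : ℕ, ∑ n ∈ Finset.Icc 1 x,
      (if IsSquare n then (1 : ℝ) / n else 0) * (ramanujanSum q n : ℝ) = Q (Nat.sqrt x) := by
    intro x
    simp only [ite_mul, zero_mul]
    rw [← Finset.sum_filter, hQdef]
    refine Finset.sum_nbij' (i := Nat.sqrt) (j := fun m => m ^ 2) ?_ ?_ ?_ ?_ ?_
    · intro n hn
      simp only [Finset.mem_filter, Finset.mem_Icc] at hn ⊢
      exact ⟨Nat.le_sqrt.2 (by omega), Nat.sqrt_le_sqrt hn.1.2⟩
    · intro m hm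
      simp only [Finset.mem_filter, Finset.mem_Icc] at hm ⊢
      refine ⟨⟨Nat.one_le_pow _ _ (by omega), ?_⟩, ⟨m, sq m⟩⟩
      calc m ^ 2 = m * m := sq m
        _ ≤ x := Nat.le_sqrt.1 hm.2
    · intro n hn
      simp only [Finset.mem_filter] at hn
      obtain ⟨r, rfl⟩ := hn.2
      rw [← sq, Nat.sqrt_eq' r]
    · intro m hm
      rw [sq]
      exact Nat.sqrt_eq m
    · intro n hn
      simp only [Finset.mem_filter] at hn
      obtain ⟨r, rfl⟩ := hn.2
      rw [← sq, Nat.sqrt_eq' r]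
      push_cast
      ring
  -- Step 2 : expand the Ramanujan sum and swap summation
  have hq0 : q ≠ 0 := hq.ne'
  have hdiv : ∀ m : ℕ, (Nat.gcd q (m ^ 2)).divisors
      = q.divisors.filter (fun d => d ∣ m ^ 2) := by
    intro m
    ext e
    simp only [Nat.mem_divisors, Finset.mem_filter, Nat.dvd_gcd_iff]
    have : Nat.gcd q (m ^ 2) ≠ 0 := Nat.gcd_ne_zero_left hq0
    tauto
  have hc : ∀ m : ℕ, ((ramanujanSum q (m ^ 2) : ℤ) : ℝ)
      = ∑ d ∈ q.divisors,
          (if d ∣ m ^ 2 then ((ArithmeticFunction.moebius (q / d) : ℤ) : ℝ) * d else 0) := by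
    intro m
    rw [ramanujanSum, hdiv m]
    push_cast
    rw [Finset.sum_filter]
  have hQ : ∀ M : ℕ, Q M = ∑ d ∈ q.divisors,
      ((ArithmeticFunction.moebius (q / d) : ℤ) : ℝ) * d *
        ∑ m ∈ Icc 1 M, (if d ∣ m ^ 2 then 1 / (m : ℝ) ^ 2 else 0) := by
    intro M
    rw [hQdef]
    calc (∑ m ∈ Icc 1 M, 1 / (m : ℝ) ^ 2 * ((ramanujanSum q (m ^ 2) : ℤ) : ℝ))
        = ∑ m ∈ Icc 1 M, ∑ d ∈ q.divisors,
            (if d ∣ m ^ 2 then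
              ((ArithmeticFunction.moebius (q / d) : ℤ) : ℝ) * d * (1 / (m : ℝ) ^ 2) else 0) := by
          refine Finset.sum_congr rfl fun m _ => ?_
          rw [hc m, Finset.mul_sum]
          exact Finset.sum_congr rfl fun d _ => by split_ifs <;> ring
      _ = ∑ d ∈ q.divisors, ∑ m ∈ Icc 1 M,
            (if d ∣ m ^ 2 then
              ((ArithmeticFunction.moebius (q / d) : ℤ) : ℝ) * d * (1 / (m : ℝ) ^ 2) else 0) :=
          Finset.sum_comm
      _ = _ := by
          refine Finset.sum_congr rfl fun d _ => ?_
          rw [Finset.mul_sum]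
          exact Finset.sum_congr rfl fun m _ => by split_ifs <;> ring
  -- Step 3 : limit of Q
  have hQt : Tendsto Q atTop (𝓝 (∑ d ∈ q.divisors,
      ((ArithmeticFunction.moebius (q / d) : ℤ) : ℝ) * d *
        (1 / (Nat.ceilRoot 2 d : ℝ) ^ 2 * (Real.pi ^ 2 / 6)))) := by
    refine Tendsto.congr (fun M => (hQ M).symm) (tendsto_finset_sum _ fun d hd => ?_)
    have hd0 : d ≠ 0 := (Nat.pos_of_mem_divisors hd).ne'
    have hs0 : 0 < Nat.ceilRoot 2 d := Nat.pos_of_ne_zero (DualRF.ceilRoot_two_ne_zero hd0)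
    have h1 : Tendsto (fun M : ℕ => ∑ k ∈ Icc 1 (M / Nat.ceilRoot 2 d), 1 / (k : ℝ) ^ 2)
        atTop (𝓝 (Real.pi ^ 2 / 6)) :=
      DualRF.basel_Icc.comp (DualRF.tendsto_nat_div_atTop hs0)
    have h2 : Tendsto (fun M : ℕ => ∑ m ∈ Icc 1 M, (if d ∣ m ^ 2 then 1 / (m : ℝ) ^ 2 else 0))
        atTop (𝓝 (1 / (Nat.ceilRoot 2 d : ℝ) ^ 2 * (Real.pi ^ 2 / 6))) :=
      Tendsto.congr (fun M => (DualRF.inner_eq hd0 M).symm) (h1.const_mul _)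
    exact h2.const_mul _
  -- Step 4 : identify the limit and compose with `Nat.sqrt`
  have hval : ∑ d ∈ q.divisors,
      ((ArithmeticFunction.moebius (q / d) : ℤ) : ℝ) * d *
        (1 / (Nat.ceilRoot 2 d : ℝ) ^ 2 * (Real.pi ^ 2 / 6))
      = Real.pi ^ 2 / 6 * ((Nat.totient q : ℝ) / q * (liouville q : ℝ)) := by
    rw [← DualRF.key hq0, Finset.mul_sum]
    exact Finset.sum_congr rfl fun d _ => by ring
  rw [hval] at hQt
  have hsqrt : Tendsto Nat.sqrt atTop atTop :=
    tendsto_atTop_atTop.2 fun b => ⟨b * b, fun a ha => Nat.le_sqrt.2 ha⟩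
  exact Tendsto.congr (fun x => (hP x).symm) (hQt.comp hsqrt)
end

section
/- Σ_{n=1}^∞ φ(n)·I_{square}(n)/n² = Σ_{q=1}^∞ μ(q)²/(q·ψ(q)), where I_{square}(n) indicates n is a perfect square and ψ(q) = q·Π_{p|q}(1+1/p); equivalently Σ_{m=1}^∞ φ(m²)/m⁴ = Σ_{q=1}^∞ μ(q)²/(q·ψ(q)). -/
open Finset

/-- The Dedekind psi function `ψ(q) = q ∏_{p ∣ q} (1 + 1/p)`. -/
noncomputable def dedekindPsi (q : ℕ) : ℝ :=
  (q : ℝ) * ∏ p ∈ q.primeFactors, (1 + 1 / (p : ℝ))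

namespace TotSq

noncomputable def f (n : ℕ) : ℝ := (Nat.totient (n ^ 2) : ℝ) / (n : ℝ) ^ 4

noncomputable def g (n : ℕ) : ℝ :=
  (ArithmeticFunction.moebius n : ℝ) ^ 2 / ((n : ℝ) * dedekindPsi n)

lemma f_zero : f 0 = 0 := by simp [f]
lemma f_one : f 1 = 1 := by simp [f]
lemma g_zero : g 0 = 0 := by simp [g]
lemma g_one : g 1 = 1 := by simp [g, dedekindPsi]

lemma f_nonneg (n : ℕ) : 0 ≤ f n := by unfold f; positivity

lemma psi_nonneg (n : ℕ) : 0 ≤ dedekindPsi n := by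
  unfold dedekindPsi; positivity

lemma g_nonneg (n : ℕ) : 0 ≤ g n := by
  have := psi_nonneg n
  unfold g; positivity

lemma f_le (n : ℕ) : f n ≤ 1 / (n : ℝ) ^ 2 := by
  rcases Nat.eq_zero_or_pos n with h | h
  · simp [h, f]
  have hn : (0:ℝ) < (n:ℝ) := by exact_mod_cast h
  have h1 : (Nat.totient (n ^ 2) : ℝ) ≤ (n : ℝ) ^ 2 := by
    exact_mod_cast Nat.totient_le (n ^ 2)
  rw [f, div_le_div_iff₀ (by positivity) (by positivity)]
  calc (Nat.totient (n ^ 2) : ℝ) * (n:ℝ)^2 ≤ (n:ℝ)^2 * (n:ℝ)^2 := by nlinarith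
    _ = 1 * (n:ℝ)^4 := by ring

lemma psi_ge (n : ℕ) : (n : ℝ) ≤ dedekindPsi n := by
  unfold dedekindPsi
  nth_rewrite 1 [← mul_one (n:ℝ)]
  apply mul_le_mul_of_nonneg_left _ (Nat.cast_nonneg n)
  calc (1:ℝ) = ∏ _p ∈ n.primeFactors, (1:ℝ) := by simp
    _ ≤ ∏ p ∈ n.primeFactors, (1 + 1 / (p:ℝ)) := by
        apply Finset.prod_le_prod
        · intros; norm_num
        · intro p _
          have : (0:ℝ) ≤ 1/(p:ℝ) := by positivity
          linarith

lemma g_le (n : ℕ) : g n ≤ 1 / (n : ℝ) ^ 2 := by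
  rcases Nat.eq_zero_or_pos n with h | h
  · simp [h, g]
  have hn : (0:ℝ) < (n:ℝ) := by exact_mod_cast h
  have hpsi := psi_ge n
  have hmu : ((ArithmeticFunction.moebius n : ℝ)) ^ 2 ≤ 1 := by
    have := ArithmeticFunction.abs_moebius_le_one (n := n)
    have : |(ArithmeticFunction.moebius n : ℝ)| ≤ 1 := by exact_mod_cast this
    nlinarith [abs_nonneg (ArithmeticFunction.moebius n : ℝ), sq_abs (ArithmeticFunction.moebius n : ℝ)]
  rw [g, div_le_div_iff₀ (by nlinarith) (by positivity)]
  nlinarith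

lemma summable_bound : Summable (fun n : ℕ => 1 / (n : ℝ) ^ 2) := by
  simpa using Real.summable_one_div_nat_pow.mpr one_lt_two

lemma summable_f : Summable f :=
  Summable.of_nonneg_of_le f_nonneg f_le summable_bound

lemma summable_g : Summable g :=
  Summable.of_nonneg_of_le g_nonneg g_le summable_bound

lemma summable_nf : Summable (fun n => ‖f n‖) := by
  simpa [Real.norm_of_nonneg (f_nonneg _)] using summable_f

lemma summable_ng : Summable (fun n => ‖g n‖) := by
  simpa [Real.norm_of_nonneg (g_nonneg _)] using summable_g

lemma f_mul {m n : ℕ} (h : Nat.Coprime m n) : f (m * n) = f m * f n := by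
  rcases Nat.eq_zero_or_pos m with hm | hm
  · subst hm; have : n = 1 := by simpa [Nat.Coprime] using h
    simp [this, f_zero, f_one]
  rcases Nat.eq_zero_or_pos n with hn | hn
  · subst hn; have : m = 1 := by simpa [Nat.Coprime] using h.symm
    simp [this, f_zero, f_one]
  have hcop : Nat.Coprime (m ^ 2) (n ^ 2) := Nat.Coprime.pow _ _ h
  rw [f, f, f, mul_pow, Nat.totient_mul hcop]
  push_cast
  rw [div_mul_div_comm]
  ring_nf

lemma psi_mul {m n : ℕ} (hm : m ≠ 0) (hn : n ≠ 0) (h : Nat.Coprime m n) :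
    dedekindPsi (m * n) = dedekindPsi m * dedekindPsi n := by
  unfold dedekindPsi
  rw [h.primeFactors_mul, Finset.prod_union h.disjoint_primeFactors]
  push_cast; ring

lemma g_mul {m n : ℕ} (h : Nat.Coprime m n) : g (m * n) = g m * g n := by
  rcases Nat.eq_zero_or_pos m with hm | hm
  · subst hm; have : n = 1 := by simpa [Nat.Coprime] using h
    simp [this, g_zero, g_one]
  rcases Nat.eq_zero_or_pos n with hn | hn
  · subst hn; have : m = 1 := by simpa [Nat.Coprime] using h.symm
    simp [this, g_zero, g_one]
  rw [g, g, g, psi_mul hm.ne' hn.ne' h,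
    ArithmeticFunction.isMultiplicative_moebius.map_mul_of_coprime h]
  push_cast
  rw [div_mul_div_comm]
  ring_nf

lemma tsum_pnat_eq (F : ℕ → ℝ) (h0 : F 0 = 0) (hs : Summable F) :
    ∑' m : ℕ+, F m = ∑' n : ℕ, F n := by
  rw [Summable.tsum_eq_zero_add hs, h0, zero_add,
    ← Equiv.pnatEquivNat.symm.tsum_eq (fun m : ℕ+ => F m)]
  simp [Equiv.pnatEquivNat]

lemma local_eq (p : Nat.Primes) :
    ∑' e : ℕ, f ((p : ℕ) ^ e) = ∑' e : ℕ, g ((p : ℕ) ^ e) := by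
  obtain ⟨P, hp⟩ := p
  simp only [PNat.mk_ofNat]
  have h2 : 2 ≤ P := hp.two_le
  have hP : (2:ℝ) ≤ (P:ℝ) := by exact_mod_cast h2
  have hP0 : (0:ℝ) < (P:ℝ) := by linarith
  -- left side
  have hinj : Function.Injective (fun e : ℕ => P ^ e) :=
    fun a b hab => Nat.pow_right_injective h2 hab
  have hsl : Summable (fun e : ℕ => f (P ^ e)) := summable_f.comp_injective hinj
  have hterm : ∀ k : ℕ, f (P ^ (k + 1)) =
      ((1 - ((P:ℝ))⁻¹) * ((P:ℝ)^2)⁻¹) * (((P:ℝ)^2)⁻¹) ^ k := by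
    intro k
    have htot : Nat.totient (P ^ ((k + 1) * 2)) = P ^ (2 * k + 1) * (P - 1) := by
      rw [Nat.totient_prime_pow hp (by omega),
        show (k + 1) * 2 - 1 = 2 * k + 1 from by omega]
    rw [f, ← pow_mul, htot]
    push_cast [Nat.cast_sub hp.one_le]
    rw [inv_pow, ← pow_mul]
    field_simp
    ring
  have hr : |((P:ℝ)^2)⁻¹| < 1 := by
    rw [abs_of_nonneg (by positivity)]
    rw [inv_lt_one_iff₀]; right; nlinarith
  have hgeo : ∑' k : ℕ, (((P:ℝ)^2)⁻¹) ^ k = (1 - ((P:ℝ)^2)⁻¹)⁻¹ :=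
    tsum_geometric_of_lt_one (by positivity) (by rw [abs_of_nonneg (by positivity)] at hr; exact hr)
  have hleft : ∑' e : ℕ, f (P ^ e) =
      1 + ((1 - ((P:ℝ))⁻¹) * ((P:ℝ)^2)⁻¹) * (1 - ((P:ℝ)^2)⁻¹)⁻¹ := by
    rw [Summable.tsum_eq_zero_add hsl]
    simp only [pow_zero, f_one]
    congr 1
    rw [tsum_congr hterm, tsum_mul_left, hgeo]
  -- right side
  have hright : ∑' e : ℕ, g (P ^ e) = 1 + 1 / ((P:ℝ) * ((P:ℝ) * (1 + 1/(P:ℝ)))) := by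
    have hzero : ∀ e ∉ Finset.range 2, g (P ^ e) = 0 := by
      intro e he
      simp only [Finset.mem_range] at he
      rw [g, ArithmeticFunction.moebius_apply_prime_pow hp (by omega : e ≠ 0)]
      rw [if_neg (by omega)]
      simp
    rw [tsum_eq_sum hzero]
    rw [Finset.sum_range_succ, Finset.sum_range_one]
    simp only [pow_zero, pow_one, g_one]
    rw [g, ArithmeticFunction.moebius_apply_prime hp]
    unfold dedekindPsi
    rw [hp.primeFactors, Finset.prod_singleton]
    push_cast
    ring_nf
  rw [hleft, hright]
  have h1 : (P:ℝ)^2 ≠ 1 := by nlinarith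
  have hp3 : (0:ℝ) < (P:ℝ)^3 := by positivity
  have h21 : (0:ℝ) < (P:ℝ)^2 - 1 := by nlinarith
  have h3 : (-(P:ℝ)^3 + (P:ℝ)^5) ≠ 0 := by nlinarith [mul_pos hp3 h21]
  field_simp
  push_cast
  ring_nf

end TotSq

theorem totient_square_sum_eq :
    ∑' m : ℕ+, (Nat.totient ((m : ℕ) ^ 2) : ℝ) / (m : ℝ) ^ 4 =
      ∑' q : ℕ+, (ArithmeticFunction.moebius (q : ℕ) : ℝ) ^ 2 /
        ((q : ℝ) * dedekindPsi (q : ℕ)) := by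
  have h1 : ∑' m : ℕ+, TotSq.f m = ∑' q : ℕ+, TotSq.g q := by
    rw [TotSq.tsum_pnat_eq _ TotSq.f_zero TotSq.summable_f,
      TotSq.tsum_pnat_eq _ TotSq.g_zero TotSq.summable_g,
      ← EulerProduct.eulerProduct_tprod TotSq.f_one (fun {m n} => TotSq.f_mul)
        TotSq.summable_nf TotSq.f_zero,
      ← EulerProduct.eulerProduct_tprod TotSq.g_one (fun {m n} => TotSq.g_mul)
        TotSq.summable_ng TotSq.g_zero]
    exact tprod_congr TotSq.local_eq
  simpa [TotSq.f, TotSq.g] using h1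
end

section
/- For every positive integer q, (λ(q)·K(q)·ψ(q))/q² = (ζ(2)/ζ(4))·Σ_{n=1}^∞ (λ(n)/n²)·c_q(n). -/
open Finset Filter Topology

/-- The radical `K(n) = ∏_{p ∣ n} p`. -/
def rad (n : ℕ) : ℕ := ∏ p ∈ n.primeFactors, p

open ArithmeticFunction hiding liouville
open scoped ArithmeticFunction.zeta ArithmeticFunction.Omega


noncomputable def Lam : ArithmeticFunction ℤ :=
  ⟨fun n => if n = 0 then 0 else liouville n, if_pos rfl⟩

noncomputable def Sq : ArithmeticFunction ℤ :=
  ⟨fun n => if n ≠ 0 ∧ IsSquare n then 1 else 0, by simp⟩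

lemma Lam_apply {n : ℕ} (hn : n ≠ 0) : Lam n = liouville n := if_neg hn

lemma liouville_mul {m n : ℕ} (hm : m ≠ 0) (hn : n ≠ 0) :
    liouville (m * n) = liouville m * liouville n := by
  simp [liouville, cardFactors_mul hm hn, pow_add]

lemma Lam_mult : Lam.IsMultiplicative := by
  rw [IsMultiplicative.iff_ne_zero]
  refine ⟨by simp [Lam, liouville], fun {m n} hm hn _ => ?_⟩
  simp only [Lam_apply hm, Lam_apply hn, Lam_apply (Nat.mul_ne_zero hm hn)]
  exact liouville_mul hm hn

lemma isSquare_mul_of_coprime {m n : ℕ} (h : Nat.Coprime m n) :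
    IsSquare (m * n) ↔ IsSquare m ∧ IsSquare n := by
  constructor
  · rintro ⟨c, hc⟩
    have hgu : IsUnit (gcd m n) := by
      rw [Nat.isUnit_iff]
      exact h
    have h1 : ∃ d, m = d ^ 2 := exists_eq_pow_of_mul_eq_pow hgu (by rw [← sq] at hc; exact hc)
    have hgu' : IsUnit (gcd n m) := by
      rw [Nat.isUnit_iff]; exact h.symm
    have h2 : ∃ d, n = d ^ 2 :=
      exists_eq_pow_of_mul_eq_pow hgu' (by rw [mul_comm, ← sq] at hc; exact hc)
    obtain ⟨a, ha⟩ := h1; obtain ⟨b, hb⟩ := h2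
    exact ⟨⟨a, by rw [ha, sq]⟩, ⟨b, by rw [hb, sq]⟩⟩
  · rintro ⟨h1, h2⟩; exact h1.mul h2

lemma Sq_mult : Sq.IsMultiplicative := by
  rw [IsMultiplicative.iff_ne_zero]
  refine ⟨by simp [Sq], fun {m n} hm hn hcop => ?_⟩
  show (if _ ∧ _ then (1:ℤ) else 0) = (if _ ∧ _ then (1:ℤ) else 0) * (if _ ∧ _ then (1:ℤ) else 0)
  by_cases h : IsSquare (m * n)
  · rw [isSquare_mul_of_coprime hcop] at h
    simp [h.1, h.2, hm, hn, (isSquare_mul_of_coprime hcop).mpr h]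
  · have : ¬(IsSquare m ∧ IsSquare n) := fun hc => h ((isSquare_mul_of_coprime hcop).mpr hc)
    rcases Decidable.not_and_iff_or_not.mp this with h' | h' <;> simp [h, h', hm, hn]

lemma isSquare_prime_pow_iff {p k : ℕ} (hp : p.Prime) : IsSquare (p ^ k) ↔ Even k := by
  constructor
  · rintro ⟨c, hc⟩
    have hc0 : c ≠ 0 := by
      rintro rfl
      rw [mul_zero] at hc
      exact pow_ne_zero k hp.ne_zero hc
    have : (Ω (p ^ k) : ℕ) = Ω c + Ω c := by rw [hc, cardFactors_mul hc0 hc0]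
    rw [cardFactors_apply_prime_pow hp] at this
    exact ⟨Ω c, this⟩
  · rintro ⟨j, rfl⟩
    exact ⟨p ^ j, by rw [← pow_add]⟩

lemma Lam_mul_zeta : (Lam * ↑ζ : ArithmeticFunction ℤ) = Sq := by
  refine (IsMultiplicative.eq_iff_eq_on_prime_powers _
    (Lam_mult.mul isMultiplicative_zeta.natCast) _ Sq_mult).mpr fun p k hp => ?_
  rw [coe_mul_zeta_apply, Nat.sum_divisors_prime_pow hp]
  have : ∀ i ∈ range (k + 1), Lam (p ^ i) = (-1 : ℤ) ^ i := by
    intro i _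
    rw [Lam_apply (pow_ne_zero i hp.ne_zero), liouville, cardFactors_apply_prime_pow hp]
  rw [Finset.sum_congr rfl this, neg_one_geom_sum]
  show _ = (if _ ∧ _ then (1:ℤ) else 0)
  simp only [pow_ne_zero k hp.ne_zero, ne_eq, not_false_eq_true, true_and,
    isSquare_prime_pow_iff hp, Nat.even_add_one]
  by_cases hk : Even k <;> simp [hk]

open scoped LSeries.notation

noncomputable def Fc : ℕ → ℂ := fun n => (liouville n : ℂ)

noncomputable def chi : ℕ → ℂ := fun n => if n ≠ 0 ∧ IsSquare n then 1 else 0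

lemma conv_eq : Fc ⍟ 1 = chi := by
  funext n
  rcases eq_or_ne n 0 with rfl | hn
  · simp [LSeries.convolution_map_zero, chi]
  · rw [LSeries.convolution_def]
    have h1 : ∑ p ∈ n.divisorsAntidiagonal, Fc p.1 * (1 : ℕ → ℂ) p.2
        = ∑ d ∈ n.divisors, Fc d := by
      rw [← Nat.sum_divisorsAntidiagonal (fun a b => Fc a)]
      simp [Pi.one_apply]
    have h2 : ∑ d ∈ n.divisors, Fc d = ((∑ d ∈ n.divisors, Lam d : ℤ) : ℂ) := by
      push_cast
      refine Finset.sum_congr rfl fun d hd => ?_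
      rw [Lam_apply (Nat.pos_of_mem_divisors hd).ne', Fc]
    show ∑ p ∈ n.divisorsAntidiagonal, Fc p.1 * (1 : ℕ → ℂ) p.2 = chi n
    rw [h1, h2, ← coe_mul_zeta_apply, Lam_mul_zeta]
    show ((if _ ∧ _ then (1:ℤ) else 0 : ℤ) : ℂ) = chi n
    unfold chi
    split <;> simp_all

lemma lam_summable : LSeriesSummable Fc 2 := by
  refine LSeriesSummable_of_le_const_mul_rpow (x := 1) (s := 2) (by norm_num) ⟨1, fun n hn => ?_⟩
  simp [Fc, liouville]

lemma chi_hasSum : HasSum (LSeries.term chi 2) ((Real.pi : ℂ) ^ 4 / 90) := by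
  have h4 : HasSum (LSeries.term 1 4) ((Real.pi : ℂ) ^ 4 / 90) := by
    have := LSeriesHasSum_one (s := 4) (by norm_num)
    rwa [riemannZeta_four] at this
  have hinj : Function.Injective (fun m : ℕ => m ^ 2) :=
    fun a b h => Nat.pow_left_injective (by norm_num) h
  have hsupp : ∀ x, x ∉ Set.range (fun m : ℕ => m ^ 2) → LSeries.term chi 2 x = 0 := by
    intro x hx
    have hxs : ¬ IsSquare x := by
      rintro ⟨c, rfl⟩; exact hx ⟨c, sq c⟩
    rcases eq_or_ne x 0 with rfl | hx0
    · simp [LSeries.term]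
    · rw [LSeries.term_of_ne_zero hx0]
      simp [chi, hxs]
  refine (hinj.hasSum_iff hsupp).mp (h4.congr_fun fun m => ?_)
  rcases eq_or_ne m 0 with rfl | hm
  · simp [LSeries.term]
  · have hm2 : m ^ 2 ≠ 0 := pow_ne_zero 2 hm
    simp only [Function.comp_apply, LSeries.term_of_ne_zero hm2, LSeries.term_of_ne_zero hm]
    rw [show chi (m ^ 2) = 1 from if_pos ⟨hm2, ⟨m, sq m⟩⟩]
    push_cast
    simp [← pow_mul]

lemma lam_hasSum_complex :
    HasSum (LSeries.term Fc 2) (((Real.pi:ℂ) ^ 4 / 90) / ((Real.pi:ℂ) ^ 2 / 6)) := by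
  have hz2 : ((Real.pi:ℂ) ^ 2 / 6) ≠ 0 := by
    rw [← riemannZeta_two]
    exact riemannZeta_ne_zero_of_one_lt_re (by norm_num)
  have h1 : LSeriesHasSum 1 2 ((Real.pi:ℂ) ^ 2 / 6) := by
    have := LSeriesHasSum_one (s := 2) (by norm_num)
    rwa [riemannZeta_two] at this
  have hconv : LSeriesHasSum (Fc ⍟ 1) 2 (LSeries Fc 2 * ((Real.pi:ℂ) ^ 2 / 6)) :=
    lam_summable.LSeriesHasSum.convolution h1
  rw [conv_eq] at hconv
  have hval : LSeries Fc 2 * ((Real.pi:ℂ) ^ 2 / 6) = (Real.pi:ℂ) ^ 4 / 90 :=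
    hconv.unique chi_hasSum
  have : LSeries Fc 2 = ((Real.pi:ℂ) ^ 4 / 90) / ((Real.pi:ℂ) ^ 2 / 6) := by
    rw [eq_div_iff hz2]
    exact hval
  exact this ▸ lam_summable.LSeriesHasSum

lemma lam_hasSum :
    HasSum (fun n : ℕ => (liouville n : ℝ) / (n : ℝ) ^ 2)
      ((Real.pi ^ 4 / 90) / (Real.pi ^ 2 / 6)) := by
  have h := Complex.reCLM.hasSum lam_hasSum_complex
  have e1 : ∀ n : ℕ, Complex.reCLM (LSeries.term Fc 2 n) = (liouville n : ℝ) / (n : ℝ) ^ 2 := by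
    intro n
    rcases eq_or_ne n 0 with rfl | hn
    · simp [LSeries.term]
    · rw [LSeries.term_of_ne_zero hn]
      have : (Fc n) / (n : ℂ) ^ (2 : ℂ) = (((liouville n : ℝ) / (n:ℝ) ^ 2 : ℝ) : ℂ) := by
        rw [show ((2:ℂ)) = ((2:ℕ):ℂ) by norm_num, Complex.cpow_natCast]
        push_cast [Fc]
        ring
      rw [this, Complex.reCLM_apply, Complex.ofReal_re]
  have e2 : Complex.reCLM (((Real.pi:ℂ) ^ 4 / 90) / ((Real.pi:ℂ) ^ 2 / 6))
      = (Real.pi ^ 4 / 90) / (Real.pi ^ 2 / 6) := by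
    rw [show (((Real.pi:ℂ) ^ 4 / 90) / ((Real.pi:ℂ) ^ 2 / 6))
        = (((Real.pi ^ 4 / 90) / (Real.pi ^ 2 / 6) : ℝ) : ℂ) by push_cast; ring,
      Complex.reCLM_apply, Complex.ofReal_re]
  rw [e2] at h
  exact h.congr_fun fun n => (e1 n).symm

lemma liouville_sq (n : ℕ) : (liouville n : ℝ) * (liouville n : ℝ) = 1 := by
  simp [liouville, ← pow_add, ← two_mul, pow_mul]

lemma sqfree_divisor_sum {q : ℕ} (hq : q ≠ 0) :
    ∑ d ∈ q.divisors, (if Squarefree d then (d : ℝ) else 0)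
      = ∏ p ∈ q.primeFactors, ((p : ℝ) + 1) := by
  rw [← Finset.sum_filter, Nat.sum_divisors_filter_squarefree hq]
  have hfin : (UniqueFactorizationMonoid.normalizedFactors q).toFinset = q.primeFactors := by
    rw [Nat.factors_eq]
    simp [Nat.toFinset_factors]
  rw [hfin, Finset.prod_add]
  refine Finset.sum_congr rfl fun t ht => ?_
  rw [Finset.prod_const_one, mul_one, Finset.prod, Nat.cast_multiset_prod]

lemma key_identity {q : ℕ} (hq : q ≠ 0) :
    ∑ e ∈ q.divisors, (ArithmeticFunction.moebius (q / e) : ℝ) * (liouville e : ℝ) / e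
      = (liouville q : ℝ) / q * ∏ p ∈ q.primeFactors, ((p : ℝ) + 1) := by
  rw [← Nat.sum_div_divisors q (fun e => (ArithmeticFunction.moebius (q / e) : ℝ)
    * (liouville e : ℝ) / e)]
  have step : ∀ d ∈ q.divisors,
      (ArithmeticFunction.moebius (q / (q / d)) : ℝ) * (liouville (q / d) : ℝ) / (q / d : ℕ)
        = (liouville q : ℝ) / q * (if Squarefree d then (d : ℝ) else 0) := by
    intro d hd
    obtain ⟨hdvd, -⟩ := Nat.mem_divisors.mp hd
    have hd0 : d ≠ 0 := fun h => hq (by simpa [h] using hdvd)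
    have hqd0 : q / d ≠ 0 :=
      Nat.div_ne_zero_iff.mpr ⟨hd0, Nat.le_of_dvd (Nat.pos_of_ne_zero hq) hdvd⟩
    rw [Nat.div_div_self hdvd hq]
    have hlam : (liouville (q / d) : ℝ) = (liouville q : ℝ) * (liouville d : ℝ) := by
      have h1 : liouville q = liouville (q / d) * liouville d := by
        conv_lhs => rw [← Nat.div_mul_cancel hdvd]
        exact liouville_mul hqd0 hd0
      have h2 : (liouville q : ℝ) = (liouville (q / d) : ℝ) * (liouville d : ℝ) := by
        exact_mod_cast h1
      rw [h2, mul_assoc, liouville_sq, mul_one]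
    have hcast : ((q / d : ℕ) : ℝ) = (q : ℝ) / d := Nat.cast_div hdvd (Nat.cast_ne_zero.mpr hd0)
    by_cases hsf : Squarefree d
    · rw [ArithmeticFunction.moebius_apply_of_squarefree hsf, if_pos hsf, hlam, hcast]
      have hmm : (((-1 : ℤ) ^ Ω d : ℤ) : ℝ) = (liouville d : ℝ) := by norm_cast
      rw [hmm]
      have h1 : (liouville d : ℝ) * ((liouville q : ℝ) * (liouville d : ℝ))
          = (liouville q : ℝ) := by
        linear_combination (liouville q : ℝ) * liouville_sq d
      have hq' : (q : ℝ) ≠ 0 := Nat.cast_ne_zero.mpr hq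
      have hd' : (d : ℝ) ≠ 0 := Nat.cast_ne_zero.mpr hd0
      rw [h1, div_div_eq_mul_div]
      ring
    · rw [if_neg hsf, ArithmeticFunction.moebius_eq_zero_of_not_squarefree hsf]
      simp
  rw [Finset.sum_congr rfl step, ← Finset.mul_sum, sqfree_divisor_sum hq]

lemma hasSum_mult {e : ℕ} (he : e ≠ 0) :
    HasSum (fun n : ℕ => if e ∣ n then (liouville n : ℝ) / (n : ℝ) ^ 2 else 0)
      ((liouville e : ℝ) / (e : ℝ) ^ 2 * ((Real.pi ^ 4 / 90) / (Real.pi ^ 2 / 6))) := by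
  have h := lam_hasSum.mul_left ((liouville e : ℝ) / (e : ℝ) ^ 2)
  have hinj : Function.Injective (fun m : ℕ => e * m) := mul_right_injective₀ he
  have hsupp : ∀ x, x ∉ Set.range (fun m : ℕ => e * m) →
      (if e ∣ x then (liouville x : ℝ) / (x : ℝ) ^ 2 else 0) = 0 := by
    intro x hx
    rw [if_neg]
    rintro ⟨c, rfl⟩
    exact hx ⟨c, rfl⟩
  refine (hinj.hasSum_iff hsupp).mp (h.congr_fun fun m => ?_)
  show (if e ∣ e * m then (liouville (e * m) : ℝ) / ((e * m : ℕ) : ℝ) ^ 2 else 0)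
      = (liouville e : ℝ) / (e : ℝ) ^ 2 * ((liouville m : ℝ) / (m : ℝ) ^ 2)
  rw [if_pos ⟨m, rfl⟩]
  rcases eq_or_ne m 0 with rfl | hm
  · simp
  · rw [liouville_mul he hm]
    push_cast
    rw [div_mul_div_comm, ← mul_pow]

lemma ram_expand {q : ℕ} (hq : q ≠ 0) (n : ℕ) :
    (ramanujanSum q n : ℝ)
      = ∑ e ∈ q.divisors, (if e ∣ n then (ArithmeticFunction.moebius (q / e) : ℝ) * e else 0) := by
  have hdiv : (Nat.gcd q n).divisors = q.divisors.filter (· ∣ n) := by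
    ext e
    simp only [Nat.mem_divisors, Finset.mem_filter, Nat.dvd_gcd_iff]
    constructor
    · rintro ⟨⟨h1, h2⟩, -⟩; exact ⟨⟨h1, hq⟩, h2⟩
    · rintro ⟨⟨h1, -⟩, h2⟩
      exact ⟨⟨h1, h2⟩, fun hg => hq (Nat.eq_zero_of_gcd_eq_zero_left hg)⟩
  rw [ramanujanSum, hdiv]
  push_cast
  rw [Finset.sum_filter]

lemma total_hasSum {q : ℕ} (hq : q ≠ 0) :
    HasSum (fun n : ℕ => (liouville n : ℝ) / (n : ℝ) ^ 2 * (ramanujanSum q n : ℝ))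
      ((Real.pi ^ 4 / 90) / (Real.pi ^ 2 / 6) *
        ((liouville q : ℝ) * (rad q : ℝ) * dedekindPsi q / (q : ℝ) ^ 2)) := by
  set T : ℝ := (Real.pi ^ 4 / 90) / (Real.pi ^ 2 / 6) with hT
  have H : ∀ e ∈ q.divisors,
      HasSum (fun n : ℕ => (ArithmeticFunction.moebius (q / e) : ℝ) * e *
          (if e ∣ n then (liouville n : ℝ) / (n : ℝ) ^ 2 else 0))
        ((ArithmeticFunction.moebius (q / e) : ℝ) * e *
          ((liouville e : ℝ) / (e : ℝ) ^ 2 * T)) := by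
    intro e he
    exact (hasSum_mult (Nat.pos_of_mem_divisors he).ne').mul_left _
  have Hsum := hasSum_sum H
  have hpt : ∀ n : ℕ, (∑ e ∈ q.divisors, (ArithmeticFunction.moebius (q / e) : ℝ) * e *
        (if e ∣ n then (liouville n : ℝ) / (n : ℝ) ^ 2 else 0))
      = (liouville n : ℝ) / (n : ℝ) ^ 2 * (ramanujanSum q n : ℝ) := by
    intro n
    rw [ram_expand hq n, Finset.mul_sum]
    refine Finset.sum_congr rfl fun e he => ?_
    by_cases h : e ∣ n <;> simp [h] <;> ring
  have hval : (∑ e ∈ q.divisors, (ArithmeticFunction.moebius (q / e) : ℝ) * e *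
        ((liouville e : ℝ) / (e : ℝ) ^ 2 * T))
      = T * ((liouville q : ℝ) * (rad q : ℝ) * dedekindPsi q / (q : ℝ) ^ 2) := by
    have step1 : ∀ e ∈ q.divisors, (ArithmeticFunction.moebius (q / e) : ℝ) * e *
          ((liouville e : ℝ) / (e : ℝ) ^ 2 * T)
        = T * ((ArithmeticFunction.moebius (q / e) : ℝ) * (liouville e : ℝ) / e) := by
      intro e he
      have he' : (e : ℝ) ≠ 0 := Nat.cast_ne_zero.mpr (Nat.pos_of_mem_divisors he).ne'
      field_simp
    rw [Finset.sum_congr rfl step1, ← Finset.mul_sum, key_identity hq]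
    have hrad : ((rad q : ℕ) : ℝ) = ∏ p ∈ q.primeFactors, (p : ℝ) := by
      rw [rad]; push_cast; rfl
    have hprod : (rad q : ℝ) * dedekindPsi q
        = (q : ℝ) * ∏ p ∈ q.primeFactors, ((p : ℝ) + 1) := by
      rw [hrad, dedekindPsi, ← mul_assoc, mul_comm _ (q : ℝ), mul_assoc, ← Finset.prod_mul_distrib]
      congr 1
      refine Finset.prod_congr rfl fun p hp => ?_
      have hp' : (p : ℝ) ≠ 0 :=
        Nat.cast_ne_zero.mpr (Nat.prime_of_mem_primeFactors hp).ne_zero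
      field_simp
    have hq' : (q : ℝ) ≠ 0 := Nat.cast_ne_zero.mpr hq
    congr 1
    rw [mul_assoc, hprod]
    field_simp
  rw [← hval]
  exact Hsum.congr_fun fun n => (hpt n).symm


theorem dual_rf_liouville_rad_psi (q : ℕ) (hq : 0 < q) :
    Tendsto (fun x : ℕ => ∑ n ∈ Finset.Icc 1 x,
        (liouville n : ℝ) / (n : ℝ) ^ 2 * (ramanujanSum q n : ℝ))
      atTop
      (𝓝 ((Real.pi ^ 4 / 90) / (Real.pi ^ 2 / 6) *
        ((liouville q : ℝ) * (rad q : ℝ) * dedekindPsi q / (q : ℝ) ^ 2))) := by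
  have h := (total_hasSum hq.ne').tendsto_sum_nat
  have h2 := h.comp (tendsto_add_atTop_nat 1)
  refine h2.congr fun x => ?_
  show ∑ n ∈ Finset.range (x + 1), _ = _
  have hr : Finset.range (x + 1) = insert 0 (Finset.Icc 1 x) := by
    ext n
    simp only [Finset.mem_range, Finset.mem_insert, Finset.mem_Icc]
    omega
  rw [hr, Finset.sum_insert (by simp)]
  simp
end

section
/- Let a : ℕ×ℕ → ℂ be such that for all positive integers q1, q2 the series A(q1,q2) := q1·q2·Σ_{k1,k2=1}^∞ a(k1 q1, k2 q2) converges. Then for all q1, q2, Σ_{n1,n2=1}^∞ a(n1,n2)·c_{q1}(n1)·c_{q2}(n2) converges and equals Σ_{d1|q1, d2|q2} μ(q1/d1)·μ(q2/d2)·A(d1,d2). -/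
open Finset Filter Topology

lemma inner_swap (q x : ℕ) (hq : 0 < q) (f : ℕ → ℂ) :
    ∑ n ∈ Finset.Icc 1 x, f n * (ramanujanSum q n : ℂ)
      = ∑ d ∈ q.divisors, (ArithmeticFunction.moebius (q / d) : ℂ) * d *
          ∑ k ∈ Finset.Icc 1 (x / d), f (k * d) := by
  have hdiv : ∀ n ∈ Finset.Icc 1 x, (Nat.gcd q n).divisors = q.divisors.filter (· ∣ n) := by
    intro n hn
    ext d
    have hg : Nat.gcd q n ≠ 0 := Nat.gcd_ne_zero_left hq.ne'
    have hq' : q ≠ 0 := hq.ne'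
    simp only [Nat.mem_divisors, Finset.mem_filter, Nat.dvd_gcd_iff]
    tauto
  calc ∑ n ∈ Finset.Icc 1 x, f n * (ramanujanSum q n : ℂ)
      = ∑ n ∈ Finset.Icc 1 x, ∑ d ∈ q.divisors.filter (· ∣ n),
          f n * ((ArithmeticFunction.moebius (q / d) : ℂ) * d) := by
        refine Finset.sum_congr rfl fun n hn => ?_
        rw [ramanujanSum, hdiv n hn]
        push_cast
        rw [Finset.mul_sum]
    _ = ∑ d ∈ q.divisors, ∑ n ∈ (Finset.Icc 1 x).filter (d ∣ ·),
          f n * ((ArithmeticFunction.moebius (q / d) : ℂ) * d) := by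
        refine Finset.sum_comm' fun n d => ?_
        simp only [Finset.mem_filter]
        tauto
    _ = ∑ d ∈ q.divisors, (ArithmeticFunction.moebius (q / d) : ℂ) * d *
          ∑ k ∈ Finset.Icc 1 (x / d), f (k * d) := by
        refine Finset.sum_congr rfl fun d hd => ?_
        have hd0 : 0 < d := Nat.pos_of_mem_divisors hd
        rw [← Finset.sum_mul, mul_comm]
        congr 1
        refine Finset.sum_nbij' (fun n => n / d) (fun k => k * d) ?_ ?_ ?_ ?_ ?_
        · intro n hn
          simp only [Finset.mem_filter, Finset.mem_Icc] at hn
          obtain ⟨⟨h1, h2⟩, h3⟩ := hn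
          simp only [Finset.mem_Icc]
          exact ⟨Nat.one_le_div_iff hd0 |>.2 (Nat.le_of_dvd (by omega) h3),
            Nat.div_le_div_right h2⟩
        · intro k hk
          simp only [Finset.mem_Icc] at hk
          simp only [Finset.mem_filter, Finset.mem_Icc]
          exact ⟨⟨Nat.one_le_iff_ne_zero.2 (Nat.mul_ne_zero (by omega) hd0.ne'),
            (Nat.le_div_iff_mul_le hd0).1 hk.2⟩, dvd_mul_left d k⟩
        · intro n hn
          simp only [Finset.mem_filter] at hn
          exact Nat.div_mul_cancel hn.2
        · intro k _
          exact Nat.mul_div_cancel k hd0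
        · intro n hn
          simp only [Finset.mem_filter] at hn
          rw [Nat.div_mul_cancel hn.2]

lemma tendsto_nat_div (d : ℕ) (hd : 0 < d) : Tendsto (· / d) atTop atTop :=
  tendsto_atTop_atTop.2 fun b => ⟨b * d, fun n hn => (Nat.le_div_iff_mul_le hd).2 hn⟩

set_option maxHeartbeats 1000000 in
theorem dual_lucht_two_variables (a A : ℕ → ℕ → ℂ)
    (hA : ∀ q₁ q₂ : ℕ, 0 < q₁ → 0 < q₂ →
      Tendsto (fun xy : ℕ × ℕ => (q₁ : ℂ) * (q₂ : ℂ) *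
          ∑ k₁ ∈ Finset.Icc 1 xy.1, ∑ k₂ ∈ Finset.Icc 1 xy.2, a (k₁ * q₁) (k₂ * q₂))
        atTop (𝓝 (A q₁ q₂)))
    (q₁ q₂ : ℕ) (hq₁ : 0 < q₁) (hq₂ : 0 < q₂) :
    Tendsto (fun xy : ℕ × ℕ =>
        ∑ n₁ ∈ Finset.Icc 1 xy.1, ∑ n₂ ∈ Finset.Icc 1 xy.2,
          a n₁ n₂ * (ramanujanSum q₁ n₁ : ℂ) * (ramanujanSum q₂ n₂ : ℂ))
      atTop
      (𝓝 (∑ d₁ ∈ q₁.divisors, ∑ d₂ ∈ q₂.divisors,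
        (ArithmeticFunction.moebius (q₁ / d₁) : ℂ) * (ArithmeticFunction.moebius (q₂ / d₂) : ℂ) *
          A d₁ d₂)) := by
  have key : ∀ xy : ℕ × ℕ,
      (∑ n₁ ∈ Finset.Icc 1 xy.1, ∑ n₂ ∈ Finset.Icc 1 xy.2,
          a n₁ n₂ * (ramanujanSum q₁ n₁ : ℂ) * (ramanujanSum q₂ n₂ : ℂ))
      = ∑ d₁ ∈ q₁.divisors, ∑ d₂ ∈ q₂.divisors,
          (ArithmeticFunction.moebius (q₁ / d₁) : ℂ) *
            (ArithmeticFunction.moebius (q₂ / d₂) : ℂ) *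
          ((d₁ : ℂ) * (d₂ : ℂ) *
            ∑ k₁ ∈ Finset.Icc 1 (xy.1 / d₁), ∑ k₂ ∈ Finset.Icc 1 (xy.2 / d₂),
              a (k₁ * d₁) (k₂ * d₂)) := by
    intro ⟨x, y⟩
    calc ∑ n₁ ∈ Finset.Icc 1 x, ∑ n₂ ∈ Finset.Icc 1 y,
            a n₁ n₂ * (ramanujanSum q₁ n₁ : ℂ) * (ramanujanSum q₂ n₂ : ℂ)
        = ∑ n₁ ∈ Finset.Icc 1 x, (∑ n₂ ∈ Finset.Icc 1 y,
            a n₁ n₂ * (ramanujanSum q₂ n₂ : ℂ)) * (ramanujanSum q₁ n₁ : ℂ) := by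
          refine Finset.sum_congr rfl fun n₁ _ => ?_
          rw [Finset.sum_mul]
          exact Finset.sum_congr rfl fun n₂ _ => by ring
      _ = ∑ n₁ ∈ Finset.Icc 1 x,
            (∑ d₂ ∈ q₂.divisors, (ArithmeticFunction.moebius (q₂ / d₂) : ℂ) * d₂ *
              ∑ k₂ ∈ Finset.Icc 1 (y / d₂), a n₁ (k₂ * d₂)) * (ramanujanSum q₁ n₁ : ℂ) := by
          refine Finset.sum_congr rfl fun n₁ _ => ?_
          rw [inner_swap q₂ y hq₂]
      _ = ∑ n₁ ∈ Finset.Icc 1 x, ∑ d₂ ∈ q₂.divisors,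
            (ArithmeticFunction.moebius (q₂ / d₂) : ℂ) * d₂ *
              ((∑ k₂ ∈ Finset.Icc 1 (y / d₂), a n₁ (k₂ * d₂)) *
                (ramanujanSum q₁ n₁ : ℂ)) := by
          refine Finset.sum_congr rfl fun n₁ _ => ?_
          rw [Finset.sum_mul]
          exact Finset.sum_congr rfl fun d₂ _ => by ring
      _ = ∑ d₂ ∈ q₂.divisors, ∑ n₁ ∈ Finset.Icc 1 x,
            (ArithmeticFunction.moebius (q₂ / d₂) : ℂ) * d₂ *
              ((∑ k₂ ∈ Finset.Icc 1 (y / d₂), a n₁ (k₂ * d₂)) *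
                (ramanujanSum q₁ n₁ : ℂ)) := Finset.sum_comm
      _ = ∑ d₂ ∈ q₂.divisors, (ArithmeticFunction.moebius (q₂ / d₂) : ℂ) * d₂ *
            ∑ n₁ ∈ Finset.Icc 1 x,
              (∑ k₂ ∈ Finset.Icc 1 (y / d₂), a n₁ (k₂ * d₂)) *
                (ramanujanSum q₁ n₁ : ℂ) := by
          refine Finset.sum_congr rfl fun d₂ _ => ?_
          rw [Finset.mul_sum]
      _ = ∑ d₂ ∈ q₂.divisors, (ArithmeticFunction.moebius (q₂ / d₂) : ℂ) * d₂ *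
            ∑ d₁ ∈ q₁.divisors, (ArithmeticFunction.moebius (q₁ / d₁) : ℂ) * d₁ *
              ∑ k₁ ∈ Finset.Icc 1 (x / d₁), ∑ k₂ ∈ Finset.Icc 1 (y / d₂),
                a (k₁ * d₁) (k₂ * d₂) := by
          refine Finset.sum_congr rfl fun d₂ _ => ?_
          rw [inner_swap q₁ x hq₁]
      _ = ∑ d₂ ∈ q₂.divisors, ∑ d₁ ∈ q₁.divisors,
            (ArithmeticFunction.moebius (q₂ / d₂) : ℂ) * d₂ *
              ((ArithmeticFunction.moebius (q₁ / d₁) : ℂ) * d₁ *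
                ∑ k₁ ∈ Finset.Icc 1 (x / d₁), ∑ k₂ ∈ Finset.Icc 1 (y / d₂),
                  a (k₁ * d₁) (k₂ * d₂)) := by
          refine Finset.sum_congr rfl fun d₂ _ => ?_
          rw [Finset.mul_sum]
      _ = _ := by
          rw [Finset.sum_comm]
          exact Finset.sum_congr rfl fun d₁ _ => Finset.sum_congr rfl fun d₂ _ => by ring
  refine Tendsto.congr (fun xy => (key xy).symm) ?_
  refine tendsto_finset_sum _ fun d₁ hd₁ => tendsto_finset_sum _ fun d₂ hd₂ => ?_
  have hd₁0 : 0 < d₁ := Nat.pos_of_mem_divisors hd₁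
  have hd₂0 : 0 < d₂ := Nat.pos_of_mem_divisors hd₂
  refine Tendsto.const_mul _ ?_
  have hmap : Tendsto (fun xy : ℕ × ℕ => (xy.1 / d₁, xy.2 / d₂)) atTop atTop := by
    rw [← prod_atTop_atTop_eq]
    exact Tendsto.prodMap (tendsto_nat_div d₁ hd₁0) (tendsto_nat_div d₂ hd₂0)
  have h2 := (hA d₁ d₂ hd₁0 hd₂0).comp hmap
  refine h2.congr fun xy => ?_
  rfl
end
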